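/- arXiv:1901.08240 — 3 statements merged into one kernel-verified Lean document; each statement's English description precedes it below -/
import Mathlib

section
/- Let G be a connected graph with m edges containing a cycle C of length ℓ. Then scfc(G) ≤ m − ℓ + ⌈log₂ ℓ⌉. -/
open SimpleGraph

/-- An edge-coloring `c` makes `G` strongly conflict-free connected if every pair of
distinct vertices is joined by a shortest path on which some color appears exactly once. -/
def IsStrongCFCColoring {V : Type*} (G : SimpleGraph V) (c : Sym2 V → ℕ) : Prop :=
  ∀ u v : V, u ≠ v → ∃ p : G.Walk u v, p.IsPath ∧ p.length = G.dist u v ∧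
    ∃ a : ℕ, (p.edges.map c).count a = 1

/-- The strong conflict-free connection number: the least number of colors needed. -/
noncomputable def scfc {V : Type*} (G : SimpleGraph V) : ℕ :=
  sInf {k | ∃ c : Sym2 V → ℕ, (∀ e ∈ G.edgeSet, c e < k) ∧ IsStrongCFCColoring G c}


private def nu (n : ℕ) : ℕ := n.factorization 2

private lemma nu_le {n t : ℕ} (h1 : 1 ≤ n) (h2 : n < 2 ^ t) : nu n < t := by
  have hd : 2 ^ nu n ∣ n := Nat.ordProj_dvd n 2
  have h3 := Nat.le_of_dvd h1 hd
  by_contra hc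
  push_neg at hc
  have : 2 ^ t ≤ 2 ^ nu n := Nat.pow_le_pow_right (by norm_num) hc
  omega

/-- among consecutive integers starting at `a ≥ 1`, the max 2-adic valuation is unique -/
private lemma uniqMax (a d : ℕ) (ha : 1 ≤ a) (hd : 1 ≤ d) :
    ∃ k₀ < d, ∀ k < d, k ≠ k₀ → nu (a + k) ≠ nu (a + k₀) := by
  obtain ⟨k₀, hk₀, hmax⟩ := Finset.exists_max_image (Finset.range d) (fun k => nu (a + k))
    ⟨0, Finset.mem_range.mpr hd⟩
  rw [Finset.mem_range] at hk₀
  refine ⟨k₀, hk₀, fun k hk hne hcontra => ?_⟩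
  -- two indices with equal max valuation M
  set M := nu (a + k₀) with hM
  -- wlog i < j with nu i = nu j = M
  obtain ⟨i, j, hij, hi, hj, hiw, hjw⟩ :
      ∃ i j, i < j ∧ nu i = M ∧ nu j = M ∧ (a ≤ i) ∧ (j < a + d) := by
    rcases Nat.lt_or_ge k k₀ with h | h
    · exact ⟨a + k, a + k₀, by omega, hcontra, rfl, by omega, by omega⟩
    · have : k₀ < k := by omega
      exact ⟨a + k₀, a + k, by omega, rfl, hcontra, by omega, by omega⟩
  have hi0 : i ≠ 0 := by omega
  have hj0 : j ≠ 0 := by omega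
  -- decompose
  have hdi : 2 ^ M ∣ i := hi ▸ Nat.ordProj_dvd i 2
  have hdj : 2 ^ M ∣ j := hj ▸ Nat.ordProj_dvd j 2
  obtain ⟨i', hi'⟩ := hdi
  obtain ⟨j', hj'⟩ := hdj
  have hoi : ¬ 2 ∣ i' := by
    intro hdvd
    have : 2 ^ (M + 1) ∣ i := by
      obtain ⟨c, hc⟩ := hdvd
      exact ⟨c, by rw [hi', hc]; ring⟩
    have := (Nat.Prime.pow_dvd_iff_le_factorization Nat.prime_two hi0).mp this
    rw [show i.factorization 2 = nu i from rfl, hi] at this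
    omega
  have hoj : ¬ 2 ∣ j' := by
    intro hdvd
    have : 2 ^ (M + 1) ∣ j := by
      obtain ⟨c, hc⟩ := hdvd
      exact ⟨c, by rw [hj', hc]; ring⟩
    have := (Nat.Prime.pow_dvd_iff_le_factorization Nat.prime_two hj0).mp this
    rw [show j.factorization 2 = nu j from rfl, hj] at this
    omega
  obtain ⟨ai, hai⟩ : ∃ ai, i' = 2 * ai + 1 := ⟨i' / 2, by omega⟩
  obtain ⟨bj, hbj⟩ : ∃ bj, j' = 2 * bj + 1 := ⟨j' / 2, by omega⟩
  have ht : (0:ℕ) < 2 ^ M := Nat.pow_pos (by norm_num)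
  have hab : ai < bj := by
    have : i' < j' := by
      by_contra hcc
      push_neg at hcc
      have : j ≤ i := by rw [hi', hj']; exact Nat.mul_le_mul_left _ hcc
      omega
    omega
  -- the midpoint i + 2^M has valuation > M and lies in the window
  set mid := i + 2 ^ M with hmid
  have hmidval : mid = 2 ^ (M+1) * (ai + 1) := by
    rw [hmid, hi', hai]; ring
  have hmidlt : mid < j := by
    have h5 : 2 ^ M * (2 * ai + 2) < 2 ^ M * (2 * bj + 1) :=
      Nat.mul_lt_mul_of_le_of_lt (le_refl _) (by omega) ht
    have h6 : mid = 2 ^ M * (2 * ai + 2) := by rw [hmid, hi', hai]; ring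
    rw [h6, hj', hbj]; exact h5
  have hmidmem : a ≤ mid ∧ mid < a + d := by constructor <;> omega
  have hmid0 : mid ≠ 0 := by omega
  have hnumid : M + 1 ≤ nu mid := by
    have : 2 ^ (M+1) ∣ mid := ⟨ai + 1, hmidval⟩
    exact (Nat.Prime.pow_dvd_iff_le_factorization Nat.prime_two hmid0).mp this
  -- contradiction with maximality
  obtain ⟨km, hkm⟩ : ∃ km, mid = a + km := ⟨mid - a, by omega⟩
  have hkmlt : km < d := by omega
  have := hmax km (Finset.mem_range.mpr hkmlt)
  rw [← hkm] at this
  omega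
private def col (L h : ℕ) (i : ℕ) : ℕ :=
  if i = 0 ∨ i = h then L - 1 else if i < h then nu i else nu (i - h)

private lemma two_le_L {ℓ : ℕ} (hℓ : 3 ≤ ℓ) : 2 ≤ Nat.clog 2 ℓ := by
  have := (Nat.lt_clog_iff_pow_lt (b := 2) (by norm_num) (x := ℓ) (y := 1)).mpr (by omega)
  omega

private lemma col_small {ℓ L h i : ℕ} (hℓ : 3 ≤ ℓ) (hL : L = Nat.clog 2 ℓ)
    (hh : h = (ℓ + 1) / 2) (hi : i < ℓ) (h0 : i ≠ 0) (hne : i ≠ h) :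
    col L h i < L - 1 := by
  have hL2 : 2 ≤ L := hL ▸ two_le_L hℓ
  have hpow : ℓ ≤ 2 ^ L := hL ▸ Nat.le_pow_clog (by norm_num) ℓ
  have hpow' : 2 ^ L = 2 * 2 ^ (L - 1) := by
    conv_lhs => rw [show L = 1 + (L - 1) by omega, pow_add, pow_one]
  have hhb : h ≤ 2 ^ (L - 1) := by omega
  rw [col, if_neg (by tauto)]
  split_ifs with hlt
  · have : nu i < L - 1 := nu_le (by omega) (by omega)
    omega
  · have h1 : 1 ≤ i - h := by omega
    have h2 : i - h < 2 ^ (L - 1) := by omega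
    have : nu (i - h) < L - 1 := nu_le h1 h2
    omega

/-- key window lemma: every cyclic window of length `d ≤ ℓ/2` has a uniquely-occurring colour -/
private lemma window {ℓ L h d s : ℕ} (hℓ : 3 ≤ ℓ) (hL : L = Nat.clog 2 ℓ)
    (hh : h = (ℓ + 1) / 2) (hd : 1 ≤ d) (h2d : 2 * d ≤ ℓ) :
    ∃ a, ∃ k₀ < d, col L h ((s + k₀) % ℓ) = a ∧
      ∀ k < d, k ≠ k₀ → col L h ((s + k) % ℓ) ≠ a := by
  have hℓ0 : 0 < ℓ := by omega
  have hL2 : 2 ≤ L := hL ▸ two_le_L hℓ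
  have hhl : h < ℓ := by omega
  have hh1 : 1 ≤ h := by omega
  by_cases H : ∃ k₀ < d, (s + k₀) % ℓ = 0 ∨ (s + k₀) % ℓ = h
  · obtain ⟨k₀, hk₀d, hk₀⟩ := H
    refine ⟨L - 1, k₀, hk₀d, by rw [col, if_pos hk₀], fun k hk hne => ?_⟩
    by_cases hk2 : (s + k) % ℓ = 0 ∨ (s + k) % ℓ = h
    · -- impossible: two special positions in a short window
      exfalso
      obtain ⟨x, y, hxy, hyd, hA, hB⟩ : ∃ x y, x < y ∧ y < d ∧
          ((s + x) % ℓ = 0 ∨ (s + x) % ℓ = h) ∧ ((s + y) % ℓ = 0 ∨ (s + y) % ℓ = h) := by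
        rcases Nat.lt_or_ge k k₀ with hc | hc
        · exact ⟨k, k₀, hc, hk₀d, hk2, hk₀⟩
        · exact ⟨k₀, k, by omega, hk, hk₀, hk2⟩
      set A := (s + x) % ℓ with hAdef
      set δ := y - x with hδdef
      have hδ1 : 1 ≤ δ := by omega
      have hδd : δ < d := by omega
      have hBeq : (s + y) % ℓ = (A + δ) % ℓ := by
        have h1 : s + y = (s + x) + δ := by omega
        rw [h1, Nat.add_mod (s + x) δ ℓ, Nat.mod_eq_of_lt (a := δ) (by omega)]
      rcases hA with hA0 | hAh
      · rw [hA0] at hBeq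
        have : (0 + δ) % ℓ = δ := by rw [Nat.zero_add]; exact Nat.mod_eq_of_lt (by omega)
        rw [this] at hBeq
        omega
      · rw [hAh] at hBeq
        have : (h + δ) % ℓ = h + δ := Nat.mod_eq_of_lt (by omega)
        rw [this] at hBeq
        omega
    · have := col_small hℓ hL hh (Nat.mod_lt _ hℓ0) (by tauto) (by tauto)
      omega
  · push_neg at H
    -- window never hits 0 or h : indices increase by one without wrapping
    have step : ∀ k, k + 1 < d → (s + (k+1)) % ℓ = (s + k) % ℓ + 1 := by
      intro k hk1
      have hlt : (s + k) % ℓ < ℓ := Nat.mod_lt _ hℓ0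
      rcases Nat.lt_or_ge ((s + k) % ℓ) (ℓ - 1) with hcase | hcase
      · have h1 : (s + (k + 1)) % ℓ = ((s + k) % ℓ + 1) % ℓ := by
          conv_lhs => rw [show s + (k + 1) = (s + k) + 1 by omega]
          rw [Nat.add_mod (s + k) 1 ℓ, Nat.mod_eq_of_lt (a := 1) (by omega)]
        rw [h1, Nat.mod_eq_of_lt (by omega)]
      · exfalso
        have h1 : (s + k) % ℓ = ℓ - 1 := by omega
        have : (s + (k+1)) % ℓ = 0 := by
          have : s + (k+1) = (s + k) + 1 := by omega
          rw [this, ← Nat.mod_add_mod, h1]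
          have : ℓ - 1 + 1 = ℓ := by omega
          rw [this, Nat.mod_self]
        exact (H (k+1) hk1).1 this
    have idx_lin : ∀ k < d, (s + k) % ℓ = s % ℓ + k := by
      intro k hk
      induction k with
      | zero => simp
      | succ n ih =>
        rw [step n (by omega), ih (by omega)]
        omega
    set i0 := s % ℓ with hi0
    have hi0pos : 1 ≤ i0 := by
      have := (H 0 hd).1; simp at this; omega
    have hi0h : i0 ≠ h := by
      have := (H 0 hd).2; simpa using this
    have hilt : ∀ k < d, i0 + k < ℓ := by
      intro k hk
      have := idx_lin k hk ▸ Nat.mod_lt (s + k) hℓ0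
      omega
    -- all on one side of h
    rcases Nat.lt_or_ge i0 h with hside | hside
    · -- all < h
      have hallk : ∀ k < d, i0 + k < h := by
        intro k hk
        by_contra hc
        push_neg at hc
        have hkk : h - i0 < d := by omega
        have := (H (h - i0) hkk).2
        rw [idx_lin _ hkk] at this
        omega
      obtain ⟨k₀, hk₀d, huniq⟩ := uniqMax i0 d hi0pos hd
      refine ⟨nu (i0 + k₀), k₀, hk₀d, ?_, fun k hk hne => ?_⟩
      · rw [idx_lin _ hk₀d, col, if_neg (by have := hallk k₀ hk₀d; omega),
          if_pos (hallk k₀ hk₀d)]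
      · rw [idx_lin _ hk, col, if_neg (by have := hallk k hk; omega), if_pos (hallk k hk)]
        exact huniq k hk hne
    · -- all > h
      have hallk : ∀ k < d, h < i0 + k := by
        intro k hk; omega
      obtain ⟨k₀, hk₀d, huniq⟩ := uniqMax (i0 - h) d (by omega) hd
      refine ⟨nu (i0 - h + k₀), k₀, hk₀d, ?_, fun k hk hne => ?_⟩
      · rw [idx_lin _ hk₀d, col, if_neg (by have := hallk k₀ hk₀d; omega),
          if_neg (by have := hallk k₀ hk₀d; omega)]
        congr 1; omega
      · rw [idx_lin _ hk, col, if_neg (by have := hallk k hk; omega),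
          if_neg (by have := hallk k hk; omega)]
        have : i0 + k - h = i0 - h + k := by omega
        rw [this]
        exact huniq k hk hne

private lemma col_le {l L h i : ℕ} (hl : 3 ≤ l) (hL : L = Nat.clog 2 l)
    (hh : h = (l + 1) / 2) (hi : i < l) : col L h i ≤ L - 1 := by
  by_cases hs : i = 0 ∨ i = h
  · rw [col, if_pos hs]
  · push_neg at hs
    exact le_of_lt (col_small hl hL hh hi hs.1 hs.2)

private lemma val_add_nat {n : ℕ} [NeZero n] (t : ZMod n) (k : ℕ) :
    (t + (k : ZMod n)).val = (t.val + k) % n := by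
  rw [ZMod.val_add, ZMod.val_natCast, Nat.add_mod t.val k n, Nat.mod_eq_of_lt (ZMod.val_lt t)]

private lemma countP_range_eq_one {d : ℕ} {p : ℕ → Bool} {k₀ : ℕ} (h1 : k₀ < d)
    (h2 : p k₀ = true) (h3 : ∀ k < d, k ≠ k₀ → p k = false) :
    (List.range d).countP p = 1 := by
  induction d with
  | zero => omega
  | succ n ih =>
    rw [List.range_succ, List.countP_append]
    rcases Nat.lt_or_ge k₀ n with hc | hc
    · rw [ih hc (fun k hk hne => h3 k (by omega) hne)]
      have : p n = false := h3 n (by omega) (by omega)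
      simp [this]
    · have hk₀n : k₀ = n := by omega
      have hz : (List.range n).countP p = 0 := by
        rw [List.countP_eq_zero]
        intro a ha
        rw [List.mem_range] at ha
        simp [h3 a (by omega) (by omega)]
      subst hk₀n
      simp [hz, h2]

private lemma count_map_eq_one {α β : Type*} [DecidableEq β] {l : List α} (hnd : l.Nodup)
    {e : α} (he : e ∈ l) (f : α → β) (hu : ∀ e' ∈ l, e' ≠ e → f e' ≠ f e) :
    (l.map f).count (f e) = 1 := by
  induction l with
  | nil => simp at he
  | cons x t ih =>
    rw [List.map_cons, List.count_cons]
    rcases List.mem_cons.mp he with rfl | het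
    · have hz : (t.map f).count (f e) = 0 := by
        rw [List.count_eq_zero]
        intro hmem
        obtain ⟨e', he', hfe⟩ := List.mem_map.mp hmem
        exact hu e' (by simp [he']) (fun hcc => (List.nodup_cons.mp hnd).1 (hcc ▸ he')) hfe
      simp [hz]
    · have hne : x ≠ e := fun hcc => (List.nodup_cons.mp hnd).1 (hcc ▸ het)
      have : (f x = f e) = False := by
        simp [hu x (by simp) hne]
      rw [ih (List.nodup_cons.mp hnd).2 het (fun e' he' hne' => hu e' (by simp [he']) hne')]
      simp [hu x (by simp) hne]

private lemma walk_support_getElem {V : Type*} {G : SimpleGraph V} :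
    ∀ {u v : V} (w : G.Walk u v) (i : ℕ) (h : i < w.support.length), w.support[i] = w.getVert i := by
  intro u v w
  induction w with
  | nil =>
    intro i h
    have : i = 0 := by simpa [SimpleGraph.Walk.support_nil] using h
    subst this
    simp [SimpleGraph.Walk.support_nil]
  | cons hadj t ih =>
    intro i h
    cases i with
    | zero => simp [SimpleGraph.Walk.support_cons]
    | succ n =>
      have hn : n < t.support.length := by
        rw [SimpleGraph.Walk.support_cons, List.length_cons] at h; omega
      simp only [SimpleGraph.Walk.support_cons, List.getElem_cons_succ,
        SimpleGraph.Walk.getVert_cons_succ]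
      exact ih n hn

private lemma walk_edges_getElem {V : Type*} {G : SimpleGraph V} :
    ∀ {u v : V} (w : G.Walk u v) (i : ℕ) (h : i < w.edges.length),
      w.edges[i] = s(w.getVert i, w.getVert (i + 1)) := by
  intro u v w
  induction w with
  | nil => intro i h; simp [SimpleGraph.Walk.edges_nil] at h
  | cons hadj t ih =>
    intro i h
    cases i with
    | zero =>
      simp only [SimpleGraph.Walk.edges_cons, List.getElem_cons_zero,
        SimpleGraph.Walk.getVert_zero, SimpleGraph.Walk.getVert_cons_succ]
    | succ n =>
      have hn : n < t.edges.length := by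
        rw [SimpleGraph.Walk.edges_cons, List.length_cons] at h; omega
      simp only [SimpleGraph.Walk.edges_cons, List.getElem_cons_succ,
        SimpleGraph.Walk.getVert_cons_succ]
      exact ih n hn
section Cycle

variable {V : Type*} {G : SimpleGraph V} {v : V} (p : G.Walk v v)

private def XC (i : ZMod p.length) : V := p.getVert i.val

private def EC (i : ZMod p.length) : Sym2 V := s(XC p i, XC p (i + 1))

variable [NeZero p.length]

private lemma zmod_add_one_val (i : ZMod p.length) : (i + 1).val = (i.val + 1) % p.length := by
  have h2 : (i + 1 : ZMod p.length) = ((i.val + 1 : ℕ) : ZMod p.length) := by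
    rw [Nat.cast_add, Nat.cast_one, ZMod.natCast_val, ZMod.cast_id]
  rw [h2, ZMod.val_natCast]

private lemma XC_adj (i : ZMod p.length) : G.Adj (XC p i) (XC p (i + 1)) := by
  have h1 : i.val < p.length := ZMod.val_lt i
  have hadj := p.adj_getVert_succ h1
  have hval := zmod_add_one_val p i
  rcases Nat.lt_or_ge (i.val + 1) p.length with hlt | hge
  · rw [XC, XC, hval, Nat.mod_eq_of_lt hlt]
    exact hadj
  · have heq : i.val + 1 = p.length := by omega
    have h0 : (i + 1).val = 0 := by rw [hval, heq, Nat.mod_self]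
    show G.Adj (p.getVert i.val) (p.getVert (i + 1).val)
    rw [h0]
    have hv : p.getVert (i.val + 1) = p.getVert 0 := by
      rw [heq, p.getVert_length, p.getVert_zero]
    exact hv ▸ hadj

private lemma XC_natCast (j : ℕ) (hj : j < p.length) : XC p (j : ZMod p.length) = p.getVert j := by
  rw [XC, ZMod.val_natCast, Nat.mod_eq_of_lt hj]

private lemma XC_natCast_succ (j : ℕ) (hj : j < p.length) :
    XC p ((j : ZMod p.length) + 1) = p.getVert (j + 1) := by
  rcases Nat.lt_or_ge (j + 1) p.length with hlt | hge
  · rw [show ((j : ZMod p.length) + 1) = ((j + 1 : ℕ) : ZMod p.length) by push_cast; ring,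
      XC_natCast p (j + 1) hlt]
  · have heq : j + 1 = p.length := by omega
    have h0 : ((j : ZMod p.length) + 1) = 0 := by
      rw [show ((j : ZMod p.length) + 1) = ((j + 1 : ℕ) : ZMod p.length) by push_cast; ring, heq]
      exact ZMod.natCast_self _
    rw [h0]
    show p.getVert (ZMod.val (0 : ZMod p.length)) = p.getVert (j + 1)
    rw [ZMod.val_zero, heq, p.getVert_length, p.getVert_zero]

private lemma EC_getElem (j : ℕ) (hj : j < p.length) :
    p.edges[j]'(by rw [SimpleGraph.Walk.length_edges]; exact hj) = EC p (j : ZMod p.length) := by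
  rw [walk_edges_getElem p j (by rw [SimpleGraph.Walk.length_edges]; exact hj), EC,
    XC_natCast p j hj, XC_natCast_succ p j hj]

private lemma EC_mem (i : ZMod p.length) : EC p i ∈ p.edges := by
  have h := EC_getElem p i.val (ZMod.val_lt i)
  rw [ZMod.natCast_val, ZMod.cast_id] at h
  rw [← h]
  exact List.getElem_mem _

private lemma mem_edges_EC {e : Sym2 V} (he : e ∈ p.edges) : ∃ i : ZMod p.length, e = EC p i := by
  obtain ⟨j, hj, hje⟩ := List.mem_iff_getElem.mp he
  have hjl : j < p.length := by rw [SimpleGraph.Walk.length_edges] at hj; exact hj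
  exact ⟨(j : ZMod p.length), by rw [← hje]; exact (EC_getElem p j hjl)⟩

private lemma XC_inj (hp : p.IsCycle) : Function.Injective (XC p) := by
  have hℓ3 : 3 ≤ p.length := hp.three_le_length
  have htl : p.support.tail.length = p.length := by
    rw [List.length_tail, SimpleGraph.Walk.length_support]
    omega
  intro i j hij
  have hnd := hp.support_nodup
  set A : ℕ → ℕ := fun k => (k + p.length - 1) % p.length with hAdef
  have hAlt : ∀ k, A k < p.length := fun k => Nat.mod_lt _ (by omega)
  have hA : ∀ k < p.length, (k = 0 ∧ A k = p.length - 1) ∨ (1 ≤ k ∧ A k = k - 1) := by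
    intro k hk
    rcases Nat.eq_zero_or_pos k with rfl | hk1
    · left
      refine ⟨rfl, ?_⟩
      show (0 + p.length - 1) % p.length = p.length - 1
      rw [Nat.zero_add, Nat.mod_eq_of_lt (by omega)]
    · right
      refine ⟨hk1, ?_⟩
      show (k + p.length - 1) % p.length = k - 1
      rw [show k + p.length - 1 = (k - 1) + p.length by omega, Nat.add_mod_right,
        Nat.mod_eq_of_lt (by omega)]
  have hTA : ∀ k, ∀ _ : k < p.length,
      p.support.tail[A k]'(by rw [htl]; exact hAlt k) = p.getVert k := by
    intro k hk
    rw [List.getElem_tail, walk_support_getElem p (A k + 1)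
      (by rw [SimpleGraph.Walk.length_support]; have := hAlt k; omega)]
    rcases hA k hk with ⟨hk0, hAk⟩ | ⟨hk1, hAk⟩
    · rw [hAk, show p.length - 1 + 1 = p.length by omega, p.getVert_length, hk0, p.getVert_zero]
    · rw [hAk, show k - 1 + 1 = k by omega]
  have h1 : p.support.tail[A i.val]'(by rw [htl]; exact hAlt _) =
      p.support.tail[A j.val]'(by rw [htl]; exact hAlt _) := by
    rw [hTA i.val (ZMod.val_lt i), hTA j.val (ZMod.val_lt j)]
    exact hij
  have h2 : A i.val = A j.val := (hnd.getElem_inj_iff).mp h1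
  have h3 : i.val = j.val := by
    have hi := hA i.val (ZMod.val_lt i)
    have hj := hA j.val (ZMod.val_lt j)
    have := ZMod.val_lt i
    have := ZMod.val_lt j
    omega
  exact ZMod.val_injective _ h3

/-- walking forward along the cycle -/
private def walkAlong (a : ZMod p.length) : (n : ℕ) → G.Walk (XC p a) (XC p (a + n))
  | 0 => SimpleGraph.Walk.nil.copy rfl (congrArg (XC p) (by push_cast; ring))
  | n + 1 => (SimpleGraph.Walk.cons (XC_adj p a) (walkAlong (a + 1) n)).copy rfl
      (congrArg (XC p) (by push_cast; ring))

private lemma walkAlong_length (a : ZMod p.length) (n : ℕ) : (walkAlong p a n).length = n := by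
  induction n generalizing a with
  | zero => simp [walkAlong]
  | succ m ih =>
    simp only [walkAlong, SimpleGraph.Walk.length_copy, SimpleGraph.Walk.length_cons]
    rw [ih]

end Cycle

section Struct

variable {V : Type*} {G : SimpleGraph V} {v : V} {p : G.Walk v v} [NeZero p.length]

private lemma path_in_cycle (hp : p.IsCycle) {u w : V} (q : G.Walk u w) (hq : q.IsPath)
    (hsub : ∀ e ∈ q.edges, e ∈ p.edges) (hlen : 1 ≤ q.length) :
    ∃ t : ZMod p.length, (∀ k ≤ q.length, q.getVert k = XC p (t + (k : ℕ))) ∨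
      (∀ k ≤ q.length, q.getVert k = XC p (t - (k : ℕ))) := by
  induction q with
  | nil => simp at hlen
  | @cons u u₂ w hadj qt ih =>
    have hqt : qt.IsPath := hq.of_cons
    have hsubt : ∀ e ∈ qt.edges, e ∈ p.edges := fun e he =>
      hsub e (by rw [SimpleGraph.Walk.edges_cons]; exact List.mem_cons_of_mem _ he)
    have hnewmem : s(u, u₂) ∈ p.edges :=
      hsub _ (by rw [SimpleGraph.Walk.edges_cons]; exact List.mem_cons_self)
    obtain ⟨i, hi⟩ := mem_edges_EC p hnewmem
    rw [EC] at hi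
    have hnot : s(u, u₂) ∉ qt.edges := by
      have := hq.edges_nodup
      rw [SimpleGraph.Walk.edges_cons, List.nodup_cons] at this
      exact this.1
    rcases Nat.eq_zero_or_pos qt.length with h0 | hpos
    · -- single edge
      have hgv : ∀ k : ℕ, k ≤ 1 → (SimpleGraph.Walk.cons hadj qt).getVert k =
          if k = 0 then u else u₂ := by
        intro k hk
        rcases Nat.eq_zero_or_pos k with rfl | hk1
        · simp
        · have hk1' : k = 1 := by omega
          subst hk1'
          rw [SimpleGraph.Walk.getVert_cons_succ, qt.getVert_zero]
          simp
      rcases Sym2.eq_iff.mp hi with ⟨hu, hu2⟩ | ⟨hu, hu2⟩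
      · refine ⟨i, Or.inl ?_⟩
        intro k hk
        rw [SimpleGraph.Walk.length_cons, h0] at hk
        rw [hgv k hk]
        rcases Nat.eq_zero_or_pos k with rfl | hk1
        · simpa using hu
        · have : k = 1 := by omega
          subst this
          simpa using hu2
      · refine ⟨i + 1, Or.inr ?_⟩
        intro k hk
        rw [SimpleGraph.Walk.length_cons, h0] at hk
        rw [hgv k hk]
        rcases Nat.eq_zero_or_pos k with rfl | hk1
        · simpa using hu
        · have : k = 1 := by omega
          subst this
          rw [if_neg (by omega)]
          rw [hu2]
          exact congrArg (XC p) (by push_cast; ring)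
    · obtain ⟨t', hdir⟩ := ih hqt hsubt hpos
      have hfe : qt.edges[0]'(by rw [SimpleGraph.Walk.length_edges]; omega) =
          s(qt.getVert 0, qt.getVert 1) := walk_edges_getElem qt 0 (by rw [SimpleGraph.Walk.length_edges]; omega)
      have hfe_mem : qt.edges[0]'(by rw [SimpleGraph.Walk.length_edges]; omega) ∈ qt.edges :=
        List.getElem_mem _
      rcases hdir with hfwd | hbwd
      · -- qt forward
        have hu₂ : u₂ = XC p t' := by
          have := hfwd 0 (by omega)
          rw [qt.getVert_zero] at this
          rw [this]
          exact congrArg (XC p) (by push_cast; ring)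
        rcases Sym2.eq_iff.mp hi with ⟨hu, hu2⟩ | ⟨hu, hu2⟩
        · -- u = XC i, u₂ = XC (i+1) : extends forward
          have hit : i + 1 = t' := XC_inj p hp (by rw [← hu2, ← hu₂])
          refine ⟨i, Or.inl ?_⟩
          intro k hk
          rcases Nat.eq_zero_or_pos k with rfl | hk1
          · rw [SimpleGraph.Walk.getVert_zero, hu]
            exact congrArg (XC p) (by push_cast; ring)
          · obtain ⟨k', rfl⟩ : ∃ k', k = k' + 1 := ⟨k - 1, by omega⟩
            rw [SimpleGraph.Walk.getVert_cons_succ,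
              hfwd k' (by rw [SimpleGraph.Walk.length_cons] at hk; omega)]
            refine congrArg (XC p) ?_
            rw [← hit]
            push_cast
            ring
        · -- u = XC (i+1), u₂ = XC i : would duplicate first edge
          exfalso
          have hit : i = t' := XC_inj p hp (by rw [← hu2, ← hu₂])
          apply hnot
          have h1 : qt.getVert 1 = XC p (t' + 1) := by
            rw [hfwd 1 (by omega)]
            exact congrArg (XC p) (by push_cast; ring)
          have h0' : qt.getVert 0 = XC p t' := by rw [qt.getVert_zero, ← hu₂]
          have : s(u, u₂) = qt.edges[0]'(by rw [SimpleGraph.Walk.length_edges]; omega) := by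
            rw [hfe, h1, h0', hi, hit, Sym2.eq_swap]
          rw [this]
          exact hfe_mem
      · -- qt backward
        have hu₂ : u₂ = XC p t' := by
          have := hbwd 0 (by omega)
          rw [qt.getVert_zero] at this
          rw [this]
          exact congrArg (XC p) (by push_cast; ring)
        rcases Sym2.eq_iff.mp hi with ⟨hu, hu2⟩ | ⟨hu, hu2⟩
        · -- u = XC i, u₂ = XC (i+1) : would duplicate first edge
          exfalso
          have hit : i + 1 = t' := XC_inj p hp (by rw [← hu2, ← hu₂])
          apply hnot
          have h1 : qt.getVert 1 = XC p (t' - 1) := by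
            rw [hbwd 1 (by omega)]
            exact congrArg (XC p) (by push_cast; ring)
          have h0' : qt.getVert 0 = XC p t' := by rw [qt.getVert_zero, ← hu₂]
          have hidx : i = t' - 1 := by rw [← hit]; ring
          have : s(u, u₂) = qt.edges[0]'(by rw [SimpleGraph.Walk.length_edges]; omega) := by
            rw [hfe, h1, h0', hi, hidx, show (t' - 1) + 1 = t' from by ring]
            exact Sym2.eq_swap
          rw [this]
          exact hfe_mem
        · -- u = XC (i+1), u₂ = XC i : extends backward
          have hit : i = t' := XC_inj p hp (by rw [← hu2, ← hu₂])
          refine ⟨t' + 1, Or.inr ?_⟩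
          intro k hk
          rcases Nat.eq_zero_or_pos k with rfl | hk1
          · rw [SimpleGraph.Walk.getVert_zero, hu, hit]
            exact congrArg (XC p) (by push_cast; ring)
          · obtain ⟨k', rfl⟩ : ∃ k', k = k' + 1 := ⟨k - 1, by omega⟩
            rw [SimpleGraph.Walk.getVert_cons_succ,
              hbwd k' (by rw [SimpleGraph.Walk.length_cons] at hk; omega)]
            exact congrArg (XC p) (by push_cast; ring_nf)

end Struct

theorem scfc_le_of_cycle {V : Type*} [Fintype V] [DecidableEq V]
    (G : SimpleGraph V) [DecidableRel G.Adj] (hc : G.Connected)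
    (v : V) (p : G.Walk v v) (hp : p.IsCycle) :
    scfc G ≤ G.edgeFinset.card - p.length + Nat.clog 2 p.length := by
  have hl3 : 3 ≤ p.length := hp.three_le_length
  haveI : NeZero p.length := ⟨by omega⟩
  set l := p.length with hldef
  set m := G.edgeFinset.card with hmdef
  set L := Nat.clog 2 l with hLdef
  set h := (l + 1) / 2 with hhdef
  have hL2 : 2 ≤ L := two_le_L hl3
  have hnd : p.edges.Nodup := hp.edges_nodup
  have hel : p.edges.length = l := p.length_edges
  have hsubE : p.edges.toFinset ⊆ G.edgeFinset := by
    intro e he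
    rw [mem_edgeFinset]
    exact p.edges_subset_edgeSet (List.mem_toFinset.mp he)
  have hlm : l ≤ m := by
    calc l = p.edges.toFinset.card := by rw [List.toFinset_card_of_nodup hnd, hel]
    _ ≤ m := Finset.card_le_card hsubE
  set F : Finset (Sym2 V) := G.edgeFinset \ p.edges.toFinset with hFdef
  have hFcard : F.card = m - l := by
    rw [hFdef, Finset.card_sdiff_of_subset hsubE, List.toFinset_card_of_nodup hnd, hel]
  classical
  set c : Sym2 V → ℕ := fun e =>
    if e ∈ p.edges then col L h (p.edges.idxOf e)
    else if he2 : e ∈ F then L + (F.equivFin ⟨e, he2⟩ : ℕ) else 0 with hcdef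
  -- basic value computations for c
  have hc_cycle : ∀ e ∈ p.edges, c e = col L h (p.edges.idxOf e) := by
    intro e he
    rw [hcdef]
    simp only [if_pos he]
  have hidxlt : ∀ e ∈ p.edges, p.edges.idxOf e < l := by
    intro e he
    rw [← hel]
    exact List.idxOf_lt_length_iff.mpr he
  have hc_cycle_le : ∀ e ∈ p.edges, c e ≤ L - 1 := by
    intro e he
    rw [hc_cycle e he]
    exact col_le hl3 hLdef hhdef (hidxlt e he)
  have hc_F : ∀ e (he : e ∈ F), c e = L + (F.equivFin ⟨e, he⟩ : ℕ) := by
    intro e he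
    have hnotc : e ∉ p.edges := by
      have := (Finset.mem_sdiff.mp (hFdef ▸ he)).2
      exact fun hcc => this (List.mem_toFinset.mpr hcc)
    rw [hcdef]
    simp only [if_neg hnotc, dif_pos he]
  have hc_EC : ∀ i : ZMod p.length, c (EC p i) = col L h i.val := by
    intro i
    have hmem := EC_mem p i
    rw [hc_cycle _ hmem]
    congr 1
    -- indexOf (EC p i) = i.val
    have h1 : p.edges.idxOf (EC p i) < p.edges.length := List.idxOf_lt_length_iff.mpr hmem
    have h2 : p.edges[p.edges.idxOf (EC p i)]'h1 = EC p i := List.getElem_idxOf h1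
    have h3 : p.edges[i.val]'(by rw [p.length_edges]; exact ZMod.val_lt i) = EC p i := by
      have := EC_getElem p i.val (ZMod.val_lt i)
      rw [ZMod.natCast_val, ZMod.cast_id] at this
      exact this
    exact (hnd.getElem_inj_iff).mp (h2.trans h3.symm)
  -- the coloring uses fewer than m - l + L colors
  apply Nat.sInf_le
  refine ⟨c, ?_, ?_⟩
  · intro e he
    by_cases hec : e ∈ p.edges
    · have := hc_cycle_le e hec
      omega
    · have heF : e ∈ F := by
        rw [hFdef, Finset.mem_sdiff, mem_edgeFinset]
        exact ⟨he, fun hcc => hec (List.mem_toFinset.mp hcc)⟩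
      rw [hc_F e heF]
      have h9 := (F.equivFin ⟨e, heF⟩).isLt
      omega
  -- strong conflict-free connectivity
  intro u w hne
  obtain ⟨w0, hw0⟩ := hc.exists_walk_length_eq_dist u w
  set q := w0.bypass with hqdef
  have hqp : q.IsPath := w0.bypass_isPath
  have hql : q.length = G.dist u w := by
    have h1 : q.length ≤ G.dist u w := hw0 ▸ w0.length_bypass_le
    have h2 : G.dist u w ≤ q.length := dist_le q
    omega
  have hd1 : 1 ≤ q.length := by
    by_contra hcc
    push_neg at hcc
    exact hne (SimpleGraph.Walk.eq_of_length_eq_zero (p := q) (by omega))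
  refine ⟨q, hqp, hql, ?_⟩
  by_cases hall : ∀ e ∈ q.edges, e ∈ p.edges
  · -- all edges on the cycle: q is an arc of the cycle
    obtain ⟨t, hdir⟩ := path_in_cycle hp q hqp hall hd1
    set d := q.length with hddef
    have hdl : d ≤ l := by
      have h1 : q.edges.toFinset.card = d := by
        rw [List.toFinset_card_of_nodup hqp.edges_nodup, q.length_edges]
      have h2 : q.edges.toFinset ⊆ p.edges.toFinset := by
        intro e he
        exact List.mem_toFinset.mpr (hall e (List.mem_toFinset.mp he))
      have h3 : p.edges.toFinset.card = l := by rw [List.toFinset_card_of_nodup hnd, hel]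
      have := Finset.card_le_card h2
      omega
    have hlsub : ((l - d : ℕ) : ZMod p.length) = ((l : ℕ) : ZMod p.length) - (d : ℕ) :=
      Nat.cast_sub hdl
    have hl0 : ((l : ℕ) : ZMod p.length) = 0 := by
      rw [hldef]
      exact ZMod.natCast_self _
    rcases hdir with hfwd | hbwd
    · -- forward arc
      have hu : u = XC p t := by
        have := hfwd 0 (by omega)
        rw [q.getVert_zero] at this
        rw [this]
        exact congrArg (XC p) (by push_cast; ring)
      have hw : w = XC p (t + (d : ℕ)) := by
        have := hfwd d (le_refl d)
        rw [hddef] at this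
        rw [q.getVert_length] at this
        exact this
      -- complementary arc gives 2 * d ≤ l
      have h2d : 2 * d ≤ l := by
        have hend : XC p ((t + (d : ℕ)) + ((l - d : ℕ) : ZMod p.length)) = u := by
          rw [hu]
          exact congrArg (XC p) (by rw [hlsub, hl0]; ring)
        have hdist := dist_le ((walkAlong p (t + (d : ℕ)) (l - d)).copy hw.symm hend)
        rw [SimpleGraph.Walk.length_copy, walkAlong_length, SimpleGraph.dist_comm] at hdist
        rw [← hql] at hdist
        omega
      -- the edges of q form a window
      have hedges : q.edges = (List.range d).map (fun k => EC p (t + (k : ℕ))) := by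
        apply List.ext_getElem
        · rw [q.length_edges, List.length_map, List.length_range]
        · intro k h1 h2
          have hkd : k < d := by rw [List.length_map, List.length_range] at h2; exact h2
          rw [walk_edges_getElem q k h1, List.getElem_map, List.getElem_range]
          rw [hfwd k (by omega), hfwd (k + 1) (by omega), EC]
          exact congrArg (fun z => s(XC p (t + (k : ℕ)), XC p z)) (by push_cast; ring)
      obtain ⟨a, k₀, hk₀d, hk₀a, huniq⟩ := window hl3 hLdef hhdef hd1 h2d (s := t.val)
      refine ⟨a, ?_⟩
      rw [hedges, List.map_map, List.count_eq_countP, List.countP_map]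
      apply countP_range_eq_one hk₀d
      · have : c (EC p (t + (k₀ : ℕ))) = col L h ((t.val + k₀) % l) := by
          rw [hc_EC, val_add_nat]
        simp only [Function.comp_apply, this, hk₀a, beq_self_eq_true]
      · intro k hk hkne
        have : c (EC p (t + (k : ℕ))) = col L h ((t.val + k) % l) := by
          rw [hc_EC, val_add_nat]
        simp only [Function.comp_apply, this]
        exact beq_eq_false_iff_ne.mpr (huniq k hk hkne)
    · -- backward arc
      have hu : u = XC p t := by
        have := hbwd 0 (by omega)
        rw [q.getVert_zero] at this
        rw [this]
        exact congrArg (XC p) (by push_cast; ring)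
      have hw : w = XC p (t - (d : ℕ)) := by
        have := hbwd d (le_refl d)
        rw [hddef] at this
        rw [q.getVert_length] at this
        exact this
      have h2d : 2 * d ≤ l := by
        have hend : XC p (t + ((l - d : ℕ) : ZMod p.length)) = w := by
          rw [hw]
          exact congrArg (XC p) (by rw [hlsub, hl0]; ring)
        have hdist := dist_le ((walkAlong p t (l - d)).copy hu.symm hend)
        rw [SimpleGraph.Walk.length_copy, walkAlong_length] at hdist
        rw [← hql] at hdist
        omega
      have hedges : q.edges.reverse = (List.range d).map (fun k => EC p (t - (d : ℕ) + (k : ℕ))) := by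
        apply List.ext_getElem
        · rw [List.length_reverse, q.length_edges, List.length_map, List.length_range]
        · intro k h1 h2
          have hkd : k < d := by rw [List.length_map, List.length_range] at h2; exact h2
          have hql2 : q.edges.length = d := q.length_edges
          rw [List.getElem_reverse, List.getElem_map, List.getElem_range]
          rw [walk_edges_getElem q (q.edges.length - 1 - k)
            (by omega)]
          have hi1 : q.edges.length - 1 - k ≤ d := by omega
          have hi2 : q.edges.length - 1 - k + 1 ≤ d := by omega
          rw [hbwd _ hi1, hbwd _ hi2, EC]
          have e1 : t - ((q.edges.length - 1 - k : ℕ) : ZMod p.length) =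
              (t - (d : ℕ) + (k : ℕ)) + 1 := by
            rw [show q.edges.length - 1 - k = d - (k + 1) by omega,
              Nat.cast_sub (by omega : k + 1 ≤ d)]
            push_cast
            ring
          have e2 : t - ((q.edges.length - 1 - k + 1 : ℕ) : ZMod p.length) =
              t - (d : ℕ) + (k : ℕ) := by
            rw [show q.edges.length - 1 - k + 1 = d - k by omega,
              Nat.cast_sub (by omega : k ≤ d)]
            push_cast
            ring
          rw [e1, e2]
          exact Sym2.eq_swap
      obtain ⟨a, k₀, hk₀d, hk₀a, huniq⟩ := window hl3 hLdef hhdef hd1 h2d (s := (t - (d : ℕ)).val)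
      refine ⟨a, ?_⟩
      rw [← List.count_reverse, ← List.map_reverse, hedges, List.map_map, List.count_eq_countP,
        List.countP_map]
      apply countP_range_eq_one hk₀d
      · have : c (EC p (t - (d : ℕ) + (k₀ : ℕ))) = col L h (((t - (d : ℕ)).val + k₀) % l) := by
          rw [hc_EC, val_add_nat]
        simp only [Function.comp_apply, this, hk₀a, beq_self_eq_true]
      · intro k hk hkne
        have : c (EC p (t - (d : ℕ) + (k : ℕ))) = col L h (((t - (d : ℕ)).val + k) % l) := by
          rw [hc_EC, val_add_nat]
        simp only [Function.comp_apply, this]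
        exact beq_eq_false_iff_ne.mpr (huniq k hk hkne)
  · -- some edge off the cycle : it has a globally unique color
    push_neg at hall
    obtain ⟨e, heq, henp⟩ := hall
    have heF : e ∈ F := by
      rw [hFdef, Finset.mem_sdiff, mem_edgeFinset]
      exact ⟨q.edges_subset_edgeSet heq, fun hcc => henp (List.mem_toFinset.mp hcc)⟩
    refine ⟨c e, ?_⟩
    apply count_map_eq_one hqp.edges_nodup heq
    intro e' he' hne'
    by_cases he'c : e' ∈ p.edges
    · have h1 := hc_cycle_le e' he'c
      rw [hc_F e heF]
      omega
    · have he'F : e' ∈ F := by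
        rw [hFdef, Finset.mem_sdiff, mem_edgeFinset]
        exact ⟨q.edges_subset_edgeSet he', fun hcc => he'c (List.mem_toFinset.mp hcc)⟩
      rw [hc_F e heF, hc_F e' he'F]
      intro hcc
      have : (F.equivFin ⟨e', he'F⟩ : ℕ) = (F.equivFin ⟨e, heF⟩ : ℕ) := by omega
      have := F.equivFin.injective (Fin.val_injective this)
      exact hne' (congrArg Subtype.val this)
end

section
/- Let G be a nontrivial connected graph of size m. Then scfc(G) = m if and only if G is the star S_m. -/
open SimpleGraph

-- counting lemma
lemma count_map_eq_one_s17 {α : Type*} [DecidableEq α] (c : α → ℕ) :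
    ∀ (l : List α) (a : α), a ∈ l → l.Nodup → (∀ x ∈ l, c x = c a → x = a) →
    (l.map c).count (c a) = 1 := by
  intro l
  induction l with
  | nil => intro a ha; simp at ha
  | cons b t ih =>
    intro a ha hnd hinj
    rcases List.mem_cons.mp ha with rfl | hat
    · simp only [List.map_cons, List.count_cons_self]
      have : (t.map c).count (c a) = 0 := by
        rw [List.count_eq_zero]
        intro hmem
        obtain ⟨x, hx, hcx⟩ := List.mem_map.mp hmem
        have := hinj x (List.mem_cons_of_mem _ hx) hcx
        subst this
        exact (List.nodup_cons.mp hnd).1 hx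
      omega
    · have hba : b ≠ a := by rintro rfl; exact (List.nodup_cons.mp hnd).1 hat
      have hcb : c b ≠ c a := fun h => hba (hinj b List.mem_cons_self h)
      simp only [List.map_cons, List.count_cons_of_ne hcb]
      exact ih a hat (List.nodup_cons.mp hnd).2
        (fun x hx => hinj x (List.mem_cons_of_mem _ hx))

lemma scfc_mem_aux {V : Type*} [Fintype V] [DecidableEq V]
    (G : SimpleGraph V) [DecidableRel G.Adj] (hc : G.Connected) :
    G.edgeFinset.card ∈ {k | ∃ c : Sym2 V → ℕ, (∀ e ∈ G.edgeSet, c e < k) ∧ IsStrongCFCColoring G c} := by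
  refine ⟨fun s => G.edgeFinset.toList.idxOf s, ?_, ?_⟩
  · intro e he
    rw [← Finset.length_toList]
    exact List.idxOf_lt_length_iff.2 (Finset.mem_toList.mpr (mem_edgeFinset.mpr he))
  · intro u v huv
    obtain ⟨p, hp⟩ := hc.exists_walk_length_eq_dist u v
    have hpath := p.isPath_of_length_eq_dist hp
    refine ⟨p, hpath, hp, ?_⟩
    have hpos : 0 < p.length := hp ▸ hc.pos_dist_of_ne huv
    have hne : p.edges ≠ [] := by
      intro h
      rw [← Walk.length_edges, h] at hpos; simp at hpos
    obtain ⟨e₀, he₀⟩ := List.exists_mem_of_ne_nil _ hne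
    exact ⟨_, count_map_eq_one_s17 (fun s => G.edgeFinset.toList.idxOf s) _ _ he₀ hpath.edges_nodup (by
      intro x hx hcx
      have hxm : x ∈ G.edgeFinset.toList :=
        Finset.mem_toList.mpr (mem_edgeFinset.mpr (p.edges_subset_edgeSet hx))
      have hem : e₀ ∈ G.edgeFinset.toList :=
        Finset.mem_toList.mpr (mem_edgeFinset.mpr (p.edges_subset_edgeSet he₀))
      exact (List.idxOf_inj hxm).mp hcx)⟩

lemma star_edge_form {V : Type*} {G : SimpleGraph V} {v : V}
    (hst : ∀ a b : V, G.Adj a b → a = v ∨ b = v) {e : Sym2 V} (he : e ∈ G.edgeSet) :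
    ∃ a : V, e = s(v, a) ∧ G.Adj v a := by
  induction e with
  | _ x y =>
    have hadj : G.Adj x y := he
    rcases hst x y hadj with rfl | rfl
    · exact ⟨y, rfl, hadj⟩
    · exact ⟨x, Sym2.eq_swap, hadj.symm⟩

lemma star_lower {V : Type*} [Fintype V] [DecidableEq V]
    (G : SimpleGraph V) [DecidableRel G.Adj] (hc : G.Connected) (v : V)
    (hst : ∀ a b : V, G.Adj a b → a = v ∨ b = v) :
    ∀ k ∈ {k | ∃ c : Sym2 V → ℕ, (∀ e ∈ G.edgeSet, c e < k) ∧ IsStrongCFCColoring G c},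
      G.edgeFinset.card ≤ k := by
  rintro k ⟨c, hbd, hcol⟩
  have hinj : Set.InjOn c G.edgeFinset := by
    intro e₁ he₁ e₂ he₂ hce
    by_contra hne
    obtain ⟨a, rfl, hva⟩ := star_edge_form hst (mem_edgeFinset.mp he₁)
    obtain ⟨b, rfl, hvb⟩ := star_edge_form hst (mem_edgeFinset.mp he₂)
    have hab : a ≠ b := fun h => hne (by rw [h])
    have hav : a ≠ v := fun h => (h ▸ hva).ne rfl
    have hbv : b ≠ v := fun h => (h ▸ hvb).ne rfl
    have hnadj : ¬ G.Adj a b := fun h => by rcases hst a b h with rfl | rfl <;> simp_all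
    have hd2 : G.dist a b = 2 := by
      have hle : G.dist a b ≤ 2 := by
        have := G.dist_le (Walk.cons hva.symm (Walk.cons hvb Walk.nil))
        simpa using this
      have h0 : G.dist a b ≠ 0 := by
        simpa using (hc.pos_dist_of_ne hab).ne'
      have h1 : G.dist a b ≠ 1 := fun h => hnadj (dist_eq_one_iff_adj.mp h)
      omega
    obtain ⟨p, hpath, hlen, col, hcount⟩ := hcol a b hab
    rw [hd2] at hlen
    cases p with
    | nil => simp at hlen
    | cons h q =>
      rename_i w
      cases q with
      | nil => simp at hlen
      | cons h' q' =>
        cases q' with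
        | nil =>
          have hwv : w = v := by
            rcases hst a w h with rfl | rfl
            · exact absurd rfl hav
            · rfl
          subst hwv
          have he1 : s(a, w) = s(w, a) := Sym2.eq_swap
          simp only [Walk.edges_cons, Walk.edges_nil, List.map_cons, List.map_nil,
            he1, hce] at hcount
          by_cases hcc : c s(w, b) = col <;> simp [List.count_cons, hcc] at hcount
        | cons h'' q'' => simp at hlen
  calc G.edgeFinset.card = (G.edgeFinset.image c).card := (Finset.card_image_of_injOn hinj).symm
    _ ≤ (Finset.range k).card := by
        apply Finset.card_le_card
        intro x hx
        obtain ⟨e, he, rfl⟩ := Finset.mem_image.mp hx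
        exact Finset.mem_range.mpr (hbd e (mem_edgeFinset.mp he))
    _ = k := Finset.card_range k

lemma exists_good_pair {V : Type*} [Fintype V] [DecidableEq V] [Nontrivial V]
    (G : SimpleGraph V) [DecidableRel G.Adj] (hc : G.Connected)
    (hns : ∀ v : V, ∃ a b : V, G.Adj a b ∧ a ≠ v ∧ b ≠ v) :
    ∃ e f : Sym2 V, e ∈ G.edgeSet ∧ f ∈ G.edgeSet ∧ e ≠ f ∧
      (∀ a b d : V, s(a, b) = e → s(b, d) = f → G.dist a d ≠ 2) ∧
      (∀ a b d : V, s(a, b) = f → s(b, d) = e → G.dist a d ≠ 2) := by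
  have hdisj : ∀ e f : Sym2 V, (∀ t, t ∈ e → t ∉ f) →
      (∀ a b d : V, s(a, b) = e → s(b, d) = f → G.dist a d ≠ 2) := by
    intro e f h a b d h1 h2 _
    exact h b (h1 ▸ Sym2.mem_mk_right a b) (h2 ▸ Sym2.mem_mk_left b d)
  -- find an edge s(x, y)
  obtain ⟨u, u', huu⟩ := exists_pair_ne V
  obtain ⟨p, hp⟩ := hc.exists_walk_length_eq_dist u u'
  have hxy : ∃ x y : V, G.Adj x y := by
    cases p with
    | nil => exact absurd rfl huu
    | cons h q => exact ⟨_, _, h⟩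
  obtain ⟨x, y, hxy⟩ := hxy
  obtain ⟨a₁, b₁, h1, ha1, hb1⟩ := hns x
  by_cases hy1 : y = a₁ ∨ y = b₁
  · -- there is z with Adj y z, z ≠ x
    have hz : ∃ z : V, G.Adj y z ∧ z ≠ x := by
      rcases hy1 with rfl | rfl
      · exact ⟨b₁, h1, hb1⟩
      · exact ⟨a₁, h1.symm, ha1⟩
    obtain ⟨z, hyz, hzx⟩ := hz
    obtain ⟨a₂, b₂, h2, ha2, hb2⟩ := hns y
    by_cases hx2 : x = a₂ ∨ x = b₂
    · have hw : ∃ w : V, G.Adj x w ∧ w ≠ y := by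
        rcases hx2 with rfl | rfl
        · exact ⟨b₂, h2, hb2⟩
        · exact ⟨a₂, h2.symm, ha2⟩
      obtain ⟨w, hxw, hwy⟩ := hw
      by_cases hwz : w = z
      · -- triangle-ish case: e = s(x,y), f = s(y,z), Adj x z
        have hxz : G.Adj x z := hwz ▸ hxw
        have hxy' : x ≠ y := hxy.ne
        have hyz' : y ≠ z := hyz.ne
        have hxz' : x ≠ z := hxz.ne
        refine ⟨s(x, y), s(y, z), hxy, hyz, ?_, ?_, ?_⟩
        · intro h
          have hmx := h ▸ Sym2.mem_mk_left x y
          rw [Sym2.mem_iff] at hmx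
          rcases hmx with h' | h'
          · exact hxy' h'
          · exact hxz' h'
        · intro a b d hab hbd
          rw [Sym2.eq_iff] at hab hbd
          rcases hab with ⟨rfl, rfl⟩ | ⟨rfl, rfl⟩
          · rcases hbd with ⟨_, rfl⟩ | ⟨h', _⟩
            · rw [dist_eq_one_iff_adj.mpr hxz]; omega
            · exact absurd h' hyz'
          · rcases hbd with ⟨h', _⟩ | ⟨h', _⟩
            · exact absurd h' hxy'
            · exact absurd h' hxz'
        · intro a b d hab hbd
          rw [Sym2.eq_iff] at hab hbd
          rcases hab with ⟨rfl, rfl⟩ | ⟨rfl, rfl⟩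
          · rcases hbd with ⟨h', _⟩ | ⟨h', _⟩
            · exact absurd h' hxz'.symm
            · exact absurd h' hyz'.symm
          · rcases hbd with ⟨h', _⟩ | ⟨_, rfl⟩
            · exact absurd h' hxy'.symm
            · rw [dist_eq_one_iff_adj.mpr hxz.symm]; omega
      · -- e = s(y,z), f = s(x,w) disjoint
        have hmem : ∀ t, t ∈ s(y, z) → t ∉ s(x, w) := by
          intro t ht ht'
          rw [Sym2.mem_iff] at ht ht'
          rcases ht with rfl | rfl <;> rcases ht' with rfl | rfl
          · exact hxy.ne rfl
          · exact hwy rfl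
          · exact hzx rfl
          · exact hwz rfl
        refine ⟨s(y, z), s(x, w), hyz, hxw, ?_, hdisj _ _ hmem, hdisj _ _ ?_⟩
        · intro h
          exact hmem y (Sym2.mem_mk_left y z) (h ▸ Sym2.mem_mk_left y z)
        · intro t ht ht'
          exact hmem t ht' ht
    · -- e = s(x,y), f = s(a₂,b₂) disjoint
      push_neg at hx2
      have hmem : ∀ t, t ∈ s(x, y) → t ∉ s(a₂, b₂) := by
        intro t ht ht'
        rw [Sym2.mem_iff] at ht ht'
        rcases ht with rfl | rfl <;> rcases ht' with rfl | rfl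
        · exact hx2.1 rfl
        · exact hx2.2 rfl
        · exact ha2 rfl
        · exact hb2 rfl
      refine ⟨s(x, y), s(a₂, b₂), hxy, h2, ?_, hdisj _ _ hmem, hdisj _ _ ?_⟩
      · intro h
        exact hmem x (Sym2.mem_mk_left x y) (h ▸ Sym2.mem_mk_left x y)
      · intro t ht ht'
        exact hmem t ht' ht
  · -- e = s(x,y), f = s(a₁,b₁) disjoint
    push_neg at hy1
    have hmem : ∀ t, t ∈ s(x, y) → t ∉ s(a₁, b₁) := by
      intro t ht ht'
      rw [Sym2.mem_iff] at ht ht'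
      rcases ht with rfl | rfl <;> rcases ht' with rfl | rfl
      · exact ha1 rfl
      · exact hb1 rfl
      · exact hy1.1 rfl
      · exact hy1.2 rfl
    refine ⟨s(x, y), s(a₁, b₁), hxy, h1, ?_, hdisj _ _ hmem, hdisj _ _ ?_⟩
    · intro h
      exact hmem x (Sym2.mem_mk_left x y) (h ▸ Sym2.mem_mk_left x y)
    · intro t ht ht'
      exact hmem t ht' ht

lemma not_star_mem {V : Type*} [Fintype V] [DecidableEq V] [Nontrivial V]
    (G : SimpleGraph V) [DecidableRel G.Adj] (hc : G.Connected)
    (hns : ∀ v : V, ∃ a b : V, G.Adj a b ∧ a ≠ v ∧ b ≠ v) :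
    G.edgeFinset.card - 1 ∈
      {k | ∃ c : Sym2 V → ℕ, (∀ e ∈ G.edgeSet, c e < k) ∧ IsStrongCFCColoring G c} := by
  obtain ⟨e, f, heE, hfE, hef, Pef, Pfe⟩ := exists_good_pair G hc hns
  set L := (G.edgeFinset.erase f).toList with hL
  have heL : e ∈ L := Finset.mem_toList.mpr (Finset.mem_erase.mpr ⟨hef, mem_edgeFinset.mpr heE⟩)
  have hLlen : L.length = G.edgeFinset.card - 1 := by
    rw [hL, Finset.length_toList, Finset.card_erase_of_mem (mem_edgeFinset.mpr hfE)]
  have hmemL : ∀ g ∈ G.edgeSet, g ≠ f → g ∈ L := fun g hg hgf =>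
    Finset.mem_toList.mpr (Finset.mem_erase.mpr ⟨hgf, mem_edgeFinset.mpr hg⟩)
  refine ⟨fun s => if s = f then L.idxOf e else L.idxOf s, ?_, ?_⟩
  · intro g hg
    rw [← hLlen]
    by_cases hgf : g = f
    · simp only [hgf, if_pos rfl]
      exact List.idxOf_lt_length_iff.2 heL
    · simp only [if_neg hgf]
      exact List.idxOf_lt_length_iff.2 (hmemL g hg hgf)
  · set c : Sym2 V → ℕ := fun s => if s = f then L.idxOf e else L.idxOf s with hcdef
    have semiinj : ∀ g ∈ G.edgeSet, ∀ g' ∈ G.edgeSet, c g = c g' →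
        g = g' ∨ (g = e ∧ g' = f) ∨ (g = f ∧ g' = e) := by
      intro g hg g' hg' hcc
      by_cases hgf : g = f <;> by_cases hgf' : g' = f
      · exact Or.inl (hgf.trans hgf'.symm)
      · subst hgf
        simp only [hcdef, if_pos rfl, if_neg hgf'] at hcc
        exact Or.inr (Or.inr ⟨rfl, ((List.idxOf_inj heL).mp hcc).symm⟩)
      · subst hgf'
        simp only [hcdef, if_pos rfl, if_neg hgf] at hcc
        exact Or.inr (Or.inl ⟨(List.idxOf_inj (hmemL g hg hgf)).mp hcc, rfl⟩)
      · simp only [hcdef, if_neg hgf, if_neg hgf'] at hcc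
        exact Or.inl ((List.idxOf_inj (hmemL g hg hgf)).mp hcc)
    intro u v huv
    obtain ⟨p, hlen⟩ := hc.exists_walk_length_eq_dist u v
    have hpath := p.isPath_of_length_eq_dist hlen
    have hnd := hpath.edges_nodup
    have hsub : ∀ x ∈ p.edges, x ∈ G.edgeSet := fun x hx => p.edges_subset_edgeSet hx
    refine ⟨p, hpath, hlen, ?_⟩
    by_cases hf : f ∈ p.edges
    · by_cases he' : e ∈ p.edges
      · -- both e and f on the path
        by_cases hg : ∃ g ∈ p.edges, g ≠ e ∧ g ≠ f
        · obtain ⟨g, hgmem, hge, hgf⟩ := hg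
          refine ⟨c g, count_map_eq_one_s17 c _ _ hgmem hnd ?_⟩
          intro x hx hcx
          rcases semiinj x (hsub x hx) g (hsub g hgmem) hcx with h | ⟨_, h⟩ | ⟨_, h⟩
          · exact h
          · exact absurd h hgf
          · exact absurd h hge
        · exfalso
          push_neg at hg
          have hsubef : p.edges.toFinset ⊆ {e, f} := by
            intro x hx
            rw [List.mem_toFinset] at hx
            rcases eq_or_ne x e with rfl | hxe
            · exact Finset.mem_insert_self _ _
            · rw [hg x hx hxe]
              exact Finset.mem_insert_of_mem (Finset.mem_singleton_self f)
          have hsupef : ({e, f} : Finset (Sym2 V)) ⊆ p.edges.toFinset := by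
            intro x hx
            rw [List.mem_toFinset]
            rcases Finset.mem_insert.mp hx with rfl | hx
            · exact he'
            · rw [Finset.mem_singleton.mp hx]; exact hf
          have hcard : p.edges.toFinset.card = 2 := by
            have := Finset.Subset.antisymm hsubef hsupef
            rw [this, Finset.card_pair hef]
          have hlen2 : p.length = 2 := by
            rw [← Walk.length_edges, ← List.toFinset_card_of_nodup hnd, hcard]
          cases p with
          | nil => simp at hlen2
          | cons h q =>
            rename_i b
            cases q with
            | nil => simp at hlen2
            | cons h' q' =>
              cases q' with
              | nil =>
                have hd2 : G.dist u v = 2 := by rw [← hlen, hlen2]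
                simp only [Walk.edges_cons, Walk.edges_nil, List.mem_cons,
                  List.not_mem_nil, or_false] at he' hf
                rcases he' with he' | he'
                · have hf' : f = s(b, v) := by
                    rcases hf with hf | hf
                    · exact absurd (hf.trans he'.symm).symm hef
                    · exact hf
                  exact Pef u b v he'.symm hf'.symm hd2
                · have hf' : f = s(u, b) := by
                    rcases hf with hf | hf
                    · exact hf
                    · exact absurd (he'.trans hf.symm) hef
                  exact Pfe u b v hf'.symm he'.symm hd2
              | cons h'' q'' => simp at hlen2
      · -- f on the path, e not
        refine ⟨c f, count_map_eq_one_s17 c _ _ hf hnd ?_⟩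
        intro x hx hcx
        rcases semiinj x (hsub x hx) f (hsub f hf) hcx with h | ⟨h, _⟩ | ⟨h, _⟩
        · exact h
        · exact absurd (h ▸ hx) he'
        · exact h
    · -- f not on the path
      have hpos : 0 < p.length := hlen ▸ hc.pos_dist_of_ne huv
      have hne : p.edges ≠ [] := by
        intro h
        rw [← Walk.length_edges, h] at hpos; simp at hpos
      obtain ⟨e₀, he₀⟩ := List.exists_mem_of_ne_nil _ hne
      refine ⟨c e₀, count_map_eq_one_s17 c _ _ he₀ hnd ?_⟩
      intro x hx hcx
      rcases semiinj x (hsub x hx) e₀ (hsub e₀ he₀) hcx with h | ⟨_, h⟩ | ⟨h, _⟩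
      · exact h
      · exact absurd (h ▸ he₀) hf
      · exact absurd (h ▸ hx) hf

theorem scfc_eq_size_iff_star {V : Type*} [Fintype V] [DecidableEq V] [Nontrivial V]
    (G : SimpleGraph V) [DecidableRel G.Adj] (hc : G.Connected) :
    scfc G = G.edgeFinset.card ↔ ∃ v : V, ∀ a b : V, G.Adj a b → a = v ∨ b = v := by
  constructor
  · intro hm
    by_contra hns
    push_neg at hns
    have hns' : ∀ v : V, ∃ a b : V, G.Adj a b ∧ a ≠ v ∧ b ≠ v := hns
    have hle : scfc G ≤ G.edgeFinset.card - 1 := Nat.sInf_le (not_star_mem G hc hns')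
    obtain ⟨v0, _, _⟩ := exists_pair_ne V
    obtain ⟨a, b, hab, -, -⟩ := hns' v0
    have hpos : 0 < G.edgeFinset.card :=
      Finset.card_pos.mpr ⟨s(a, b), mem_edgeFinset.mpr hab⟩
    omega
  · rintro ⟨v, hst⟩
    refine le_antisymm (Nat.sInf_le (scfc_mem_aux G hc)) ?_
    exact le_csInf ⟨_, scfc_mem_aux G hc⟩ (star_lower G hc v hst)
end

section
/- For the Möbius ladder M_{2k} (k ≥ 3), scfc(M_{2k}) = 2 if and only if 3 ≤ k ≤ 7. -/
open SimpleGraph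

/-- The Möbius ladder `M_{2k}`: the circulant graph on `ZMod (2 * k)` with connections
`±1` (the `2k`-cycle) and `k` (the "rungs", including the two crossing edges). -/
def mobiusLadder (k : ℕ) : SimpleGraph (ZMod (2 * k)) :=
  SimpleGraph.fromRel (fun u v => v = u + 1 ∨ v = u + (k : ZMod (2 * k)))

set_option linter.unusedSectionVars false
set_option linter.unusedVariables false
set_option maxRecDepth 8000


variable {V : Type} [DecidableEq V] {G : SimpleGraph V}

def ofChain : (u : V) → (l : List V) → List.Chain G.Adj u l →
    G.Walk u ((u :: l).getLast (List.cons_ne_nil u l))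
  | _, [], _ => Walk.nil
  | _, _ :: _, h => Walk.cons (List.chain_cons.mp h).1
      (ofChain _ _ (show List.Chain G.Adj _ _ from (List.chain_cons.mp h).2))

theorem ofChain_support : ∀ (u : V) (l : List V) (h : List.Chain G.Adj u l),
    (ofChain u l h).support = u :: l
  | _, [], _ => rfl
  | u, b :: rest, h => by
      exact congrArg (u :: ·) (ofChain_support b rest _)

theorem ofChain_length : ∀ (u : V) (l : List V) (h : List.Chain G.Adj u l),
    (ofChain u l h).length = l.length
  | _, [], _ => rfl
  | u, b :: rest, h => by
      exact congrArg (· + 1) (ofChain_length b rest _)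

theorem ofChain_edges : ∀ (u : V) (l : List V) (h : List.Chain G.Adj u l),
    (ofChain u l h).edges = List.zipWith (fun a b => s(a, b)) (u :: l) l
  | _, [], _ => rfl
  | u, b :: rest, h => by
      exact congrArg (s(u, b) :: ·) (ofChain_edges b rest _)

theorem walk_length_ge (d : V → ℕ) (hd : ∀ x y, G.Adj x y → d y ≤ d x + 1) :
    ∀ {x y : V} (p : G.Walk x y), d y ≤ d x + p.length := by
  intro x y p
  induction p with
  | nil => simp
  | cons h q ih =>
      have := hd _ _ h
      rw [Walk.length_cons]
      omega


def ChainP {V : Type} (R : V → V → Prop) : V → List V → Prop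
  | _, [] => True
  | a, b :: t => R a b ∧ ChainP R b t

instance ChainP.dec {V : Type} {R : V → V → Prop} [DecidableRel R] :
    ∀ (a : V) (l : List V), Decidable (ChainP R a l)
  | _, [] => isTrue trivial
  | a, b :: t =>
    match ChainP.dec b t with
    | isTrue h => match ‹DecidableRel R› a b with
      | isTrue h2 => isTrue ⟨h2, h⟩
      | isFalse h2 => isFalse fun hh => h2 hh.1
    | isFalse h => isFalse fun hh => h hh.2

theorem ChainP.toChain {V : Type} {R : V → V → Prop} :
    ∀ {a : V} {l : List V}, ChainP R a l → List.Chain R a l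
  | _, [], _ => List.Chain.nil
  | _, _ :: _, h => List.Chain.cons h.1 (ChainP.toChain h.2)

/-- A decidable sufficient condition for a single pair. -/
abbrev CheckOne (G : SimpleGraph V) (c : Sym2 V → ℕ) (n : ℕ) (u v : V) (l : List V) : Prop :=
  l.head? = some u ∧ l.getLast? = some v ∧ (∀ h : l ≠ [], ChainP G.Adj (l.head h) l.tail) ∧ l.Nodup ∧
    l.length = n + 1 ∧ ∃ a ∈ [0, 1], ((l.zipWith (fun a b => s(a, b)) l.tail).map c).count a = 1


theorem isCFC_of_lists (c : Sym2 V → ℕ) (d : V → V → ℕ)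
    (hd0 : ∀ x, d x x = 0)
    (hd : ∀ u x y, G.Adj x y → d u y ≤ d u x + 1)
    (L : List (List V))
    (hL : ∀ u v : V, u ≠ v → ∃ l ∈ L, CheckOne G c (d u v) u v l) :
    IsStrongCFCColoring G c := by
  intro u v huv
  obtain ⟨l, -, h1, h2, hch, hnd, hlen, a, -, hcount⟩ := hL u v huv
  cases l with
  | nil => simp at h1
  | cons x t =>
    have hx : x = u := by simpa using h1
    subst hx
    have hch' : List.Chain G.Adj x t := ChainP.toChain (hch (List.cons_ne_nil x t))
    have hv : v = (x :: t).getLast (List.cons_ne_nil x t) := by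
      have := List.getLast?_eq_getLast (l := x :: t) (List.cons_ne_nil x t)
      rw [this] at h2
      exact (Option.some_injective _ h2).symm
    subst hv
    refine ⟨ofChain x t hch', ?_, ?_, a, ?_⟩
    · rw [Walk.isPath_def, ofChain_support]; exact hnd
    · have hlen' : (ofChain x t hch').length = d x ((x :: t).getLast (List.cons_ne_nil x t)) := by
        rw [ofChain_length]; simp only [List.length_cons] at hlen; omega
      have hub := hlen' ▸ SimpleGraph.dist_le (ofChain x t hch')
      obtain ⟨q, hq⟩ := (Walk.reachable (ofChain x t hch')).exists_walk_length_eq_dist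
      have hlb := walk_length_ge (G := G) (d x) (hd x) q
      rw [hd0 x, hq] at hlb
      omega
    · rw [ofChain_edges]
      exact hcount

instance (k : ℕ) : DecidableRel (mobiusLadder k).Adj := fun u v =>
  inferInstanceAs (Decidable (u ≠ v ∧ _))

def mlCol (k : ℕ) : Sym2 (ZMod (2 * k)) → ℕ :=
  Sym2.lift ⟨fun u v =>
      if v = u + 1 ∧ u ≠ v + 1 then u.val % 2
      else if u = v + 1 ∧ v ≠ u + 1 then v.val % 2
      else if k % 2 = 1 then 0 else (min u.val v.val + 1) % 2, by
    intro u v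
    simp only
    split_ifs <;> first | rfl | tauto | rw [min_comm]⟩

theorem mlCol_lt (k : ℕ) : ∀ e, mlCol k e < 2 := by
  intro e
  induction e using Sym2.ind with
  | _ u v => simp only [mlCol, Sym2.lift_mk]; split_ifs <;> omega

def mlDist (k : ℕ) (u v : ZMod (2 * k)) : ℕ :=
  let g := (v - u).val
  min (min g (2 * k - g)) (1 + if k ≤ g then g - k else k - g)
def paths3 : List (List (ZMod (2*3))) := [[0, 1], [0, 1, 2], [0, 3], [0, 3, 4], [0, 5], [1, 0], [1, 2], [1, 2, 3], [1, 4], [1, 0, 5], [2, 1, 0], [2, 1], [2, 3], [2, 1, 4], [2, 5], [3, 0], [3, 2, 1], [3, 2], [3, 4], [3, 0, 5], [4, 3, 0], [4, 1], [4, 1, 2], [4, 3], [4, 5], [5, 0], [5, 0, 1], [5, 2], [5, 0, 3], [5, 4]]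

def paths4 : List (List (ZMod (2*4))) := [[0, 1], [0, 1, 2], [0, 7, 3], [0, 4], [0, 4, 5], [0, 7, 6], [0, 7], [1, 0], [1, 2], [1, 2, 3], [1, 0, 4], [1, 5], [1, 5, 6], [1, 0, 7], [2, 1, 0], [2, 1], [2, 3], [2, 3, 4], [2, 1, 5], [2, 6], [2, 6, 7], [3, 7, 0], [3, 2, 1], [3, 2], [3, 4], [3, 4, 5], [3, 2, 6], [3, 7], [4, 0], [4, 0, 1], [4, 3, 2], [4, 3], [4, 5], [4, 5, 6], [4, 3, 7], [5, 4, 0], [5, 1], [5, 1, 2], [5, 4, 3], [5, 4], [5, 6], [5, 6, 7], [6, 7, 0], [6, 5, 1], [6, 2], [6, 2, 3], [6, 5, 4], [6, 5], [6, 7], [7, 0], [7, 0, 1], [7, 6, 2], [7, 3], [7, 3, 4], [7, 6, 5], [7, 6]]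

def paths5 : List (List (ZMod (2*5))) := [[0, 1], [0, 1, 2], [0, 1, 2, 3], [0, 9, 4], [0, 5], [0, 5, 6], [0, 1, 2, 7], [0, 9, 8], [0, 9], [1, 0], [1, 2], [1, 2, 3], [1, 0, 9, 4], [1, 6, 5], [1, 6], [1, 2, 7], [1, 0, 9, 8], [1, 0, 9], [2, 1, 0], [2, 1], [2, 3], [2, 3, 4], [2, 1, 0, 5], [2, 1, 6], [2, 7], [2, 7, 8], [2, 1, 0, 9], [3, 2, 1, 0], [3, 2, 1], [3, 2], [3, 4], [3, 4, 5], [3, 2, 1, 6], [3, 8, 7], [3, 8], [3, 4, 9], [4, 9, 0], [4, 3, 2, 1], [4, 3, 2], [4, 3], [4, 5], [4, 5, 6], [4, 3, 2, 7], [4, 3, 8], [4, 9], [5, 0], [5, 6, 1], [5, 0, 1, 2], [5, 4, 3], [5, 4], [5, 6], [5, 6, 7], [5, 0, 9, 8], [5, 0, 9], [6, 5, 0], [6, 1], [6, 1, 2], [6, 1, 2, 3], [6, 5, 4], [6, 5], [6, 7], [6, 7, 8], [6, 1, 0, 9], [7, 2, 1, 0], [7, 2, 1], [7, 2], [7, 8,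 3], [7, 2, 3, 4], [7, 6, 5], [7, 6], [7, 8], [7, 8, 9], [8, 9, 0], [8, 3, 2, 1], [8, 7, 2], [8, 3], [8, 3, 4], [8, 3, 4, 5], [8, 7, 6], [8, 7], [8, 9], [9, 0], [9, 0, 1], [9, 0, 1, 2], [9, 4, 3], [9, 4], [9, 0, 5], [9, 0, 1, 6], [9, 8, 7], [9, 8]]

def paths6 : List (List (ZMod (2*6))) := [[0, 1], [0, 1, 2], [0, 1, 2, 3], [0, 6, 5, 4], [0, 11, 5], [0, 6], [0, 6, 7], [0, 1, 2, 8], [0, 11, 10, 9], [0, 11, 10], [0, 11], [1, 0], [1, 2], [1, 2, 3], [1, 2, 3, 4], [1, 0, 6, 5], [1, 0, 6], [1, 7], [1, 7, 8], [1, 2, 3, 9], [1, 0, 11, 10], [1, 0, 11], [2, 1, 0], [2, 1], [2, 3], [2, 3, 4], [2, 3, 4, 5], [2, 1, 0, 6], [2, 1, 7], [2, 8], [2, 8, 9], [2, 3, 4, 10], [2, 1, 0, 11], [3, 2, 1, 0], [3, 2, 1], [3, 2], [3, 4], [3, 4, 5], [3, 4, 5, 6], [3, 2, 1, 7], [3,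 2, 8], [3, 9], [3, 9, 10], [3, 4, 5, 11], [4, 5, 6, 0], [4, 3, 2, 1], [4, 3, 2], [4, 3], [4, 5], [4, 5, 6], [4, 5, 6, 7], [4, 3, 2, 8], [4, 3, 9], [4, 10], [4, 10, 11], [5, 11, 0], [5, 6, 0, 1], [5, 4, 3, 2], [5, 4, 3], [5, 4], [5, 6], [5, 6, 7], [5, 6, 7, 8], [5, 4, 3, 9], [5, 4, 10], [5, 11], [6, 0], [6, 0, 1], [6, 0, 1, 2], [6, 5, 4, 3], [6, 5, 4], [6, 5], [6, 7], [6, 7, 8], [6, 7, 8, 9], [6, 0, 11, 10], [6, 5, 11], [7, 6, 0], [7, 1], [7, 1, 2], [7, 1, 2, 3], [7, 6, 5, 4], [7, 6, 5], [7, 6], [7, 8], [7, 8, 9], [7, 8, 9, 10], [7, 1, 0, 11], [8, 2, 1, 0], [8, 7, 1], [8, 2], [8, 2, 3], [8, 2, 3, 4], [8, 7, 6, 5], [8, 7, 6], [8, 7], [8, 9], [8, 9, 10], [8, 9, 10, 11], [9, 10, 11, 0], [9, 3, 2, 1], [9, 8, 2], [9, 3], [9, 3, 4], [9, 3, 4,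 5], [9, 8, 7, 6], [9, 8, 7], [9, 8], [9, 10], [9, 10, 11], [10, 11, 0], [10, 11, 0, 1], [10, 4, 3, 2], [10, 9, 3], [10, 4], [10, 4, 5], [10, 4, 5, 6], [10, 9, 8, 7], [10, 9, 8], [10, 9], [10, 11], [11, 0], [11, 0, 1], [11, 0, 1, 2], [11, 5, 4, 3], [11, 10, 4], [11, 5], [11, 5, 6], [11, 0, 1, 7], [11, 10, 9, 8], [11, 10, 9], [11, 10]]

def paths7 : List (List (ZMod (2*7))) := [[0, 1], [0, 1, 2], [0, 1, 2, 3], [0, 7, 6, 5, 4], [0, 7, 6, 5], [0, 13, 6], [0, 7], [0, 7, 8], [0, 1, 2, 9], [0, 1, 2, 3, 10], [0, 13, 12, 11], [0, 13, 12], [0, 13], [1, 0], [1, 2], [1, 2, 3], [1, 2, 3, 4], [1, 0, 7, 6, 5], [1, 0, 13, 6], [1, 8, 7], [1, 8], [1, 2, 9], [1, 2, 3, 10], [1, 2, 3, 10, 11], [1, 0, 13, 12], [1, 0, 13], [2, 1, 0], [2, 1], [2, 3], [2, 3, 4], [2, 3, 4, 5], [2, 1, 0, 7, 6], [2, 1,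 0, 7], [2, 1, 8], [2, 9], [2, 9, 10], [2, 3, 4, 11], [2, 3, 4, 5, 12], [2, 1, 0, 13], [3, 2, 1, 0], [3, 2, 1], [3, 2], [3, 4], [3, 4, 5], [3, 4, 5, 6], [3, 2, 1, 0, 7], [3, 2, 1, 8], [3, 10, 9], [3, 10], [3, 4, 11], [3, 4, 5, 12], [3, 4, 5, 12, 13], [4, 5, 6, 7, 0], [4, 3, 2, 1], [4, 3, 2], [4, 3], [4, 5], [4, 5, 6], [4, 5, 6, 7], [4, 3, 2, 9, 8], [4, 3, 2, 9], [4, 3, 10], [4, 11], [4, 11, 12], [4, 5, 6, 13], [5, 6, 7, 0], [5, 6, 7, 0, 1], [5, 4, 3, 2], [5, 4, 3], [5, 4], [5, 6], [5, 6, 7], [5, 6, 7, 8], [5, 4, 3, 2, 9], [5, 4, 3, 10], [5, 12, 11], [5, 12], [5, 6, 13], [6, 13, 0], [6, 7, 8, 1], [6, 7, 0, 1, 2], [6, 5, 4, 3], [6, 5, 4], [6, 5], [6, 7], [6, 7, 8], [6, 7, 8, 9], [6, 5, 4, 11, 10], [6, 5, 4, 11], [6, 5, 12], [6, 13], [7,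 0], [7, 8, 1], [7, 0, 1, 2], [7, 0, 1, 2, 3], [7, 6, 5, 4], [7, 6, 5], [7, 6], [7, 8], [7, 8, 9], [7, 8, 9, 10], [7, 6, 5, 4, 11], [7, 0, 13, 12], [7, 0, 13], [8, 7, 0], [8, 1], [8, 1, 2], [8, 1, 2, 3], [8, 9, 2, 3, 4], [8, 7, 6, 5], [8, 7, 6], [8, 7], [8, 9], [8, 9, 10], [8, 9, 10, 11], [8, 1, 0, 13, 12], [8, 1, 0, 13], [9, 2, 1, 0], [9, 2, 1], [9, 2], [9, 10, 3], [9, 2, 3, 4], [9, 2, 3, 4, 5], [9, 8, 7, 6], [9, 8, 7], [9, 8], [9, 10], [9, 10, 11], [9, 10, 11, 12], [9, 8, 1, 0, 13], [10, 3, 2, 1, 0], [10, 3, 2, 1], [10, 9, 2], [10, 3], [10, 3, 4], [10, 3, 4, 5], [10, 11, 4, 5, 6], [10, 9, 8, 7], [10, 9, 8], [10, 9], [10, 11], [10, 11, 12], [10, 11, 12, 13], [11, 12, 13, 0], [11, 10, 3, 2, 1], [11, 4, 3, 2], [11, 4, 3], [11, 4], [11, 12, 5], [11, 4, 5, 6],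 [11, 4, 5, 6, 7], [11, 10, 9, 8], [11, 10, 9], [11, 10], [11, 12], [11, 12, 13], [12, 13, 0], [12, 13, 0, 1], [12, 5, 4, 3, 2], [12, 5, 4, 3], [12, 11, 4], [12, 5], [12, 5, 6], [12, 5, 6, 7], [12, 13, 0, 1, 8], [12, 11, 10, 9], [12, 11, 10], [12, 11], [12, 13], [13, 0], [13, 0, 1], [13, 0, 1, 2], [13, 12, 5, 4, 3], [13, 6, 5, 4], [13, 6, 5], [13, 6], [13, 0, 7], [13, 0, 1, 8], [13, 0, 1, 8, 9], [13, 12, 11, 10], [13, 12, 11], [13, 12]]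


theorem cfc3 : IsStrongCFCColoring (mobiusLadder 3) (mlCol 3) := by
  apply isCFC_of_lists (mlCol 3) (mlDist 3) (by decide) (by decide) paths3 (by decide)

theorem cfc4 : IsStrongCFCColoring (mobiusLadder 4) (mlCol 4) := by
  apply isCFC_of_lists (mlCol 4) (mlDist 4) (by decide) (by decide) paths4 (by decide)

theorem cfc5 : IsStrongCFCColoring (mobiusLadder 5) (mlCol 5) := by
  apply isCFC_of_lists (mlCol 5) (mlDist 5) (by decide) (by decide) paths5 (by decide)

theorem cfc6 : IsStrongCFCColoring (mobiusLadder 6) (mlCol 6) := by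
  apply isCFC_of_lists (mlCol 6) (mlDist 6) (by decide) (by decide) paths6 (by decide)

theorem cfc7 : IsStrongCFCColoring (mobiusLadder 7) (mlCol 7) := by
  apply isCFC_of_lists (mlCol 7) (mlDist 7) (by decide) (by decide) paths7 (by decide)

section Lower
variable {k : ℕ}

theorem ml_adj_cases (h : (mobiusLadder k).Adj u v) :
    v = u + 1 ∨ v = u - 1 ∨ v = u + (k : ZMod (2 * k)) := by
  rw [mobiusLadder, fromRel_adj] at h
  obtain ⟨hne, (h | h) | (h | h)⟩ := h
  · exact Or.inl h
  · exact Or.inr (Or.inr h)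
  · exact Or.inr (Or.inl (by rw [h]; ring))
  · refine Or.inr (Or.inr ?_)
    have hkk : (k : ZMod (2 * k)) + k = 0 := by
      have : ((2 * k : ℕ) : ZMod (2 * k)) = 0 := ZMod.natCast_self _
      push_cast at this
      linear_combination this
    rw [h]
    linear_combination -hkk

theorem ml_walk_sum : ∀ {u v : ZMod (2 * k)} (p : (mobiusLadder k).Walk u v),
    ∃ a b m : ℕ, a + b + m = p.length ∧
      v = u + (((a : ℤ) - b + m * k : ℤ) : ZMod (2 * k)) := by
  intro u v p
  induction p with
  | nil => exact ⟨0, 0, 0, rfl, by push_cast; ring⟩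
  | @cons u w v h q ih =>
    obtain ⟨a, b, m, hl, hv⟩ := ih
    rcases ml_adj_cases h with hw | hw | hw
    · exact ⟨a + 1, b, m, by simp [Walk.length_cons]; omega,
        by rw [hv, hw]; push_cast; ring⟩
    · exact ⟨a, b + 1, m, by simp [Walk.length_cons]; omega,
        by rw [hv, hw]; push_cast; ring⟩
    · exact ⟨a, b, m + 1, by simp [Walk.length_cons]; omega,
        by rw [hv, hw]; push_cast; ring⟩

theorem dvd_cases (K D : ℤ) (hK : 0 < K) (h : 2 * K ∣ D) (h1 : -(2 * K) < D) (h2 : D < 4 * K) :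
    D = 0 ∨ D = 2 * K := by
  obtain ⟨t, rfl⟩ := h
  have hpos : (0 : ℤ) < 2 * K := by omega
  have ht1 : -1 < t := by
    have := (mul_lt_mul_iff_right₀ hpos).mp (by linarith : 2 * K * (-1) < 2 * K * t)
    omega
  have ht2 : t < 2 := by
    have := (mul_lt_mul_iff_right₀ hpos).mp (by linarith : 2 * K * t < 2 * K * 2)
    omega
  interval_cases t
  · exact Or.inl (by ring)
  · exact Or.inr (by ring)

theorem key_int (kk g a b m : ℤ) (hk : 8 ≤ kk) (hg : 1 ≤ g) (hg4 : g ≤ 4)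
    (hab : a + b + m ≤ g - 1) (ha : 0 ≤ a) (hb : 0 ≤ b) (hm : 0 ≤ m) (δ : ℤ)
    (hδ : δ = -1 ∨ δ = kk) (hdvd : 2 * kk ∣ δ + a - b + m * kk - g) : False := by
  have hm3 : m ≤ 3 := by omega
  rcases hδ with rfl | rfl <;> interval_cases m <;>
    rcases dvd_cases _ _ (by omega) hdvd (by omega) (by omega) with h | h <;> omega
def arcEdges (u : ZMod (2 * k)) : ℕ → List (Sym2 (ZMod (2 * k)))
  | 0 => []
  | j + 1 => s(u, u + 1) :: arcEdges (u + 1) j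

theorem ml_adj_succ (hk : 1 ≤ k) (u : ZMod (2 * k)) : (mobiusLadder k).Adj u (u + 1) := by
  rw [mobiusLadder, fromRel_adj]
  refine ⟨fun h => ?_, Or.inl (Or.inl rfl)⟩
  have h1 : ((1 : ℕ) : ZMod (2 * k)) = 0 := by push_cast; linear_combination -h
  rw [ZMod.natCast_eq_zero_iff] at h1
  have := Nat.le_of_dvd one_pos h1
  omega

def arcWalk (hk : 1 ≤ k) (u : ZMod (2 * k)) :
    (j : ℕ) → (mobiusLadder k).Walk u (u + (j : ZMod (2 * k)))
  | 0 => Walk.nil.copy rfl (by simp)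
  | j + 1 => (Walk.cons (ml_adj_succ hk u) (arcWalk hk (u + 1) j)).copy rfl
      (by push_cast; ring)

theorem arcWalk_length (hk : 1 ≤ k) : ∀ (j : ℕ) (u : ZMod (2 * k)),
    (arcWalk hk u j).length = j
  | 0, u => by simp [arcWalk]
  | j + 1, u => by
    rw [arcWalk, Walk.length_copy, Walk.length_cons, arcWalk_length hk j]

theorem cast_ne_zero_of (hk : 1 ≤ k) {j : ℕ} (h1 : 0 < j) (h2 : j < 2 * k) :
    ((j : ℕ) : ZMod (2 * k)) ≠ 0 := by
  intro h
  rw [ZMod.natCast_eq_zero_iff] at h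
  have := Nat.le_of_dvd h1 h
  omega

theorem arc_char (hk : 8 ≤ k) : ∀ (j : ℕ), j ≤ 4 → ∀ (u v : ZMod (2 * k))
    (p : (mobiusLadder k).Walk u v), v = u + (j : ZMod (2 * k)) → p.length ≤ j →
    p.edges = arcEdges u j ∧ p.length = j := by
  have hkz : (8 : ℤ) ≤ (k : ℤ) := by exact_mod_cast hk
  intro j
  induction j with
  | zero =>
    intro _ u v p hv hl
    have hvu : v = u := by simpa using hv
    subst hvu
    have h0 : p.length = 0 := Nat.le_zero.mp hl
    refine ⟨List.length_eq_zero_iff.mp ?_, h0⟩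
    rw [Walk.length_edges, h0]
  | succ j ih =>
    intro hj u v p hv hl
    have hne : u ≠ v := by
      rw [hv]
      intro h
      rw [left_eq_add] at h
      exact cast_ne_zero_of (by omega) (by omega) (by omega) h
    obtain ⟨w, hadj, q, rfl⟩ := Walk.exists_eq_cons_of_ne hne p
    have hql : q.length ≤ j := by
      rw [Walk.length_cons] at hl; omega
    rcases ml_adj_cases hadj with hw | hw | hw
    · have hv' : v = w + (j : ZMod (2 * k)) := by rw [hv, hw]; push_cast; ring
      obtain ⟨he, hlen⟩ := ih (by omega) w v q hv' hql
      subst hw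
      exact ⟨by rw [Walk.edges_cons, he]; rfl, by rw [Walk.length_cons, hlen]⟩
    · exfalso
      obtain ⟨a, b, m, hlq, hsum⟩ := ml_walk_sum q
      rw [hw] at hsum
      have E : (((j + 1 : ℕ) : ℤ) : ZMod (2 * k)) =
          ((-1 + ((a : ℤ) - b + m * k) : ℤ) : ZMod (2 * k)) := by
        push_cast at hv hsum ⊢
        linear_combination hsum - hv
      have hdvd := ((ZMod.intCast_eq_intCast_iff _ _ _).mp E).dvd
      push_cast at hdvd
      refine key_int k (j + 1 : ℕ) a b m hkz (by push_cast; omega) (by push_cast; omega)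
        (by push_cast; omega) (by positivity) (by positivity) (by positivity) (-1)
        (Or.inl rfl) ?_
      have : (-1 : ℤ) + (a : ℤ) - b + m * k - ((j + 1 : ℕ) : ℤ) =
          -1 + ((a : ℤ) - b + m * k) - ((j + 1 : ℕ) : ℤ) := by ring
      rw [this]
      exact hdvd
    · exfalso
      obtain ⟨a, b, m, hlq, hsum⟩ := ml_walk_sum q
      rw [hw] at hsum
      have E : (((j + 1 : ℕ) : ℤ) : ZMod (2 * k)) =
          (((k : ℤ) + ((a : ℤ) - b + m * k) : ℤ) : ZMod (2 * k)) := by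
        push_cast at hv hsum ⊢
        linear_combination hsum - hv
      have hdvd := ((ZMod.intCast_eq_intCast_iff _ _ _).mp E).dvd
      push_cast at hdvd
      refine key_int k (j + 1 : ℕ) a b m hkz (by push_cast; omega) (by push_cast; omega)
        (by push_cast; omega) (by positivity) (by positivity) (by positivity) (k : ℤ)
        (Or.inr rfl) ?_
      have : (k : ℤ) + (a : ℤ) - b + m * k - ((j + 1 : ℕ) : ℤ) =
          (k : ℤ) + ((a : ℤ) - b + m * k) - ((j + 1 : ℕ) : ℤ) := by ring
      rw [this]
      exact hdvd
theorem count_pair {x y a : ℕ} (h : ([x, y]).count a = 1) : x ≠ y := by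
  rintro rfl
  by_cases h' : x = a <;> simp [List.count_cons, h'] at h

theorem count_quad {x1 x2 x3 x4 a : ℕ} (h12 : x1 ≠ x2) (h23 : x2 ≠ x3) (h34 : x3 ≠ x4)
    (b1 : x1 < 2) (b2 : x2 < 2) (b3 : x3 < 2) (b4 : x4 < 2)
    (h : ([x1, x2, x3, x4]).count a = 1) : False := by
  have ha : a < 2 := by
    by_contra hge
    have hnm : a ∉ [x1, x2, x3, x4] := by simp; omega
    rw [List.count_eq_zero_of_not_mem hnm] at h
    omega
  interval_cases a <;> interval_cases x1 <;> interval_cases x2 <;> interval_cases x3 <;>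
    interval_cases x4 <;> simp_all [List.count_cons]

theorem no_two_coloring {k : ℕ} (hk : 8 ≤ k) (c : Sym2 (ZMod (2 * k)) → ℕ)
    (hb : ∀ e ∈ (mobiusLadder k).edgeSet, c e < 2)
    (hcfc : IsStrongCFCColoring (mobiusLadder k) c) : False := by
  have hk1 : 1 ≤ k := by omega
  have step2 : ∀ u : ZMod (2 * k), c s(u, u + 1) ≠ c s(u + 1, u + 1 + 1) := by
    intro u
    have hne : u ≠ u + ((2 : ℕ) : ZMod (2 * k)) := by
      intro h
      rw [left_eq_add] at h
      exact cast_ne_zero_of hk1 (by omega) (by omega) h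
    obtain ⟨p, hp, hl, a, hcnt⟩ := hcfc u (u + ((2 : ℕ) : ZMod (2 * k))) hne
    have hle : p.length ≤ 2 := by
      rw [hl]
      calc (mobiusLadder k).dist u (u + ((2:ℕ) : ZMod (2*k))) ≤ (arcWalk hk1 u 2).length :=
            SimpleGraph.dist_le _
        _ = 2 := arcWalk_length hk1 2 u
    obtain ⟨he, -⟩ := arc_char hk 2 (by omega) u _ p rfl hle
    rw [he] at hcnt
    exact count_pair hcnt
  have hne4 : (0 : ZMod (2 * k)) ≠ 0 + ((4 : ℕ) : ZMod (2 * k)) := by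
    intro h
    rw [left_eq_add] at h
    exact cast_ne_zero_of hk1 (by omega) (by omega) h
  obtain ⟨p, hp, hl, a, hcnt⟩ := hcfc 0 (0 + ((4 : ℕ) : ZMod (2 * k))) hne4
  have hle : p.length ≤ 4 := by
    rw [hl]
    calc (mobiusLadder k).dist 0 (0 + ((4:ℕ) : ZMod (2*k))) ≤ (arcWalk hk1 0 4).length :=
          SimpleGraph.dist_le _
      _ = 4 := arcWalk_length hk1 4 0
  obtain ⟨he, -⟩ := arc_char hk 4 le_rfl 0 _ p rfl hle
  rw [he] at hcnt
  have hb' : ∀ u : ZMod (2 * k), c s(u, u + 1) < 2 := fun u =>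
    hb _ ((mem_edgeSet _).mpr (ml_adj_succ hk1 u))
  exact count_quad (step2 0) (step2 (0 + 1)) (step2 (0 + 1 + 1))
    (hb' 0) (hb' (0 + 1)) (hb' (0 + 1 + 1)) (hb' (0 + 1 + 1 + 1)) hcnt

theorem two_le_of_mem {k m : ℕ} (hk : 3 ≤ k) (c : Sym2 (ZMod (2 * k)) → ℕ)
    (hb : ∀ e ∈ (mobiusLadder k).edgeSet, c e < m)
    (hcfc : IsStrongCFCColoring (mobiusLadder k) c) : 2 ≤ m := by
  by_contra hm
  push_neg at hm
  have hkz : (3 : ℤ) ≤ (k : ℤ) := by exact_mod_cast hk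
  have hne : (0 : ZMod (2 * k)) ≠ ((2 : ℕ) : ZMod (2 * k)) := by
    intro h
    exact cast_ne_zero_of (by omega) (by omega) (by omega) h.symm
  obtain ⟨p, hp, hl, a, hcnt⟩ := hcfc 0 ((2 : ℕ) : ZMod (2 * k)) hne
  have hlen2 : 2 ≤ p.length := by
    by_contra hlt
    push_neg at hlt
    obtain ⟨aa, bb, mm, hsum, hv⟩ := ml_walk_sum p
    have E : (((2 : ℕ) : ℤ) : ZMod (2 * k)) =
        (((aa : ℤ) - bb + mm * k : ℤ) : ZMod (2 * k)) := by
      push_cast at hv ⊢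
      linear_combination hv
    have hdvd := ((ZMod.intCast_eq_intCast_iff _ _ _).mp E).dvd
    push_cast at hdvd
    have hmm : mm ≤ 1 := by omega
    interval_cases mm <;>
      [skip; skip] <;> {
        have h0 := Int.eq_zero_of_abs_lt_dvd hdvd (by rw [abs_lt]; constructor <;> push_cast <;> omega)
        push_cast at h0
        omega }
  have hall : ∀ x ∈ p.edges.map c, x = 0 := by
    intro x hx
    obtain ⟨e, he, rfl⟩ := List.mem_map.mp hx
    have := hb e (Walk.edges_subset_edgeSet p he)
    omega
  have ha0 : a = 0 := by
    refine hall a ?_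
    rw [← List.count_pos_iff, hcnt]
    omega
  subst ha0
  rw [List.count_eq_length.mpr fun b hbb => (hall b hbb).symm, List.length_map,
    Walk.length_edges] at hcnt
  omega

theorem mem_of_sInf_eq {S : Set ℕ} {n : ℕ} (h : sInf S = n) (hn : n ≠ 0) : n ∈ S := by
  rcases S.eq_empty_or_nonempty with rfl | hne
  · rw [Nat.sInf_empty] at h
    exact absurd h.symm hn
  · exact h ▸ Nat.sInf_mem hne

theorem scfc_eq_two_of {k : ℕ} (hk : 3 ≤ k) (c : Sym2 (ZMod (2 * k)) → ℕ)
    (hb : ∀ e ∈ (mobiusLadder k).edgeSet, c e < 2)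
    (hcfc : IsStrongCFCColoring (mobiusLadder k) c) : scfc (mobiusLadder k) = 2 := by
  have hmem : 2 ∈ {m | ∃ c : Sym2 (ZMod (2 * k)) → ℕ,
      (∀ e ∈ (mobiusLadder k).edgeSet, c e < m) ∧
      IsStrongCFCColoring (mobiusLadder k) c} := ⟨c, hb, hcfc⟩
  refine le_antisymm (Nat.sInf_le hmem) (le_csInf ⟨2, hmem⟩ ?_)
  rintro b ⟨c', hb', hcfc'⟩
  exact two_le_of_mem hk c' hb' hcfc'

theorem scfc_mobiusLadder (k : ℕ) (hk : 3 ≤ k) :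
    scfc (mobiusLadder k) = 2 ↔ k ≤ 7 := by
  constructor
  · intro h2
    by_contra hgt
    push_neg at hgt
    have h2' : sInf {m | ∃ c : Sym2 (ZMod (2 * k)) → ℕ,
        (∀ e ∈ (mobiusLadder k).edgeSet, c e < m) ∧
        IsStrongCFCColoring (mobiusLadder k) c} = 2 := h2
    obtain ⟨c, hb, hcfc⟩ := mem_of_sInf_eq h2' (by decide)
    exact no_two_coloring hgt c hb hcfc
  · intro h7
    interval_cases k
    · exact scfc_eq_two_of (by omega) (mlCol 3) (fun e _ => mlCol_lt 3 e) cfc3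
    · exact scfc_eq_two_of (by omega) (mlCol 4) (fun e _ => mlCol_lt 4 e) cfc4
    · exact scfc_eq_two_of (by omega) (mlCol 5) (fun e _ => mlCol_lt 5 e) cfc5
    · exact scfc_eq_two_of (by omega) (mlCol 6) (fun e _ => mlCol_lt 6 e) cfc6
    · exact scfc_eq_two_of (by omega) (mlCol 7) (fun e _ => mlCol_lt 7 e) cfc7
end Lower
end
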